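/- arXiv:math/9908012 — 10 statements merged into one kernel-verified Lean document; each statement's English description precedes it below -/
import Mathlib

section
/- (Weyl's inequality) For n×n Hermitian matrices A, B and C = A + B, whenever i + j − 1 ≤ n one has γ_{i+j−1} ≤ α_i + β_j, where α, β, γ are the eigenvalues of A, B, C listed in decreasing order. -/
open Matrix BigOperators

local notation "⟪" x ", " y "⟫" => @inner ℂ _ _ x y

section WeylAux
variable {n : ℕ}

lemma coeff_zero_of_mem_span (b : OrthonormalBasis (Fin n) ℂ (EuclideanSpace ℂ (Fin n)))
    (S : Finset (Fin n)) (x : EuclideanSpace ℂ (Fin n))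
    (hx : x ∈ Submodule.span ℂ (b '' (S : Set (Fin n)))) {m : Fin n} (hm : m ∉ S) :
    ⟪b m, x⟫ = 0 := by
  induction hx using Submodule.span_induction with
  | mem y hy =>
    obtain ⟨k, hk, rfl⟩ := hy
    exact b.orthonormal.2 (fun h => hm (h ▸ hk))
  | zero => simp
  | add y z _ _ hy hz => rw [inner_add_right, hy, hz, add_zero]
  | smul a y _ hy => rw [inner_smul_right, hy, mul_zero]

lemma norm_sq_eq_sum_coeff (b : OrthonormalBasis (Fin n) ℂ (EuclideanSpace ℂ (Fin n)))
    (x : EuclideanSpace ℂ (Fin n)) : ‖x‖ ^ 2 = ∑ k, ‖⟪b k, x⟫‖ ^ 2 := by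
  rw [show ‖x‖ = ‖b.repr x‖ from (b.repr.norm_map x).symm, EuclideanSpace.norm_eq,
    Real.sq_sqrt (by positivity)]
  simp [b.repr_apply_apply]

lemma mulVec_eq_sum {M : Matrix (Fin n) (Fin n) ℂ} (hM : M.IsHermitian)
    (x : EuclideanSpace ℂ (Fin n)) :
    (WithLp.toLp 2 (M *ᵥ x) : EuclideanSpace ℂ (Fin n)) =
      ∑ k, ((⟪hM.eigenvectorBasis k, x⟫ : ℂ) * (hM.eigenvalues k : ℂ)) • hM.eigenvectorBasis k := by
  set b := hM.eigenvectorBasis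
  set c : Fin n → ℂ := fun k => ⟪b k, x⟫ with hc
  have h1 : x = ∑ k, c k • b k := (b.sum_repr' x).symm
  apply WithLp.ofLp_injective
  calc (WithLp.toLp 2 (M *ᵥ x) : EuclideanSpace ℂ (Fin n))
      = M.mulVecLin (∑ k, c k • (b k : EuclideanSpace ℂ (Fin n))) := by
        rw [h1]; simp only [WithLp.ofLp_sum, WithLp.ofLp_smul]; rfl
    _ = ∑ k, c k • M.mulVecLin (b k) := by rw [map_sum]; simp
    _ = ∑ k, (c k * (hM.eigenvalues k : ℂ)) • (b k : EuclideanSpace ℂ (Fin n)) := by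
        rw [WithLp.ofLp_sum]
        refine Finset.sum_congr rfl fun k _ => ?_
        have := hM.mulVec_eigenvectorBasis k
        show c k • (M *ᵥ (b k : EuclideanSpace ℂ (Fin n))) = _
        rw [show (M *ᵥ (b k : EuclideanSpace ℂ (Fin n))) = hM.eigenvalues k • (b k : Fin n → ℂ) from this]
        rw [RCLike.real_smul_eq_coe_smul (K := ℂ), smul_smul]
        rfl

lemma re_inner_mulVec_eq {M : Matrix (Fin n) (Fin n) ℂ} (hM : M.IsHermitian)
    (x : EuclideanSpace ℂ (Fin n)) :
    RCLike.re ⟪x, (WithLp.toLp 2 (M *ᵥ x) : EuclideanSpace ℂ (Fin n))⟫ =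
      ∑ k, hM.eigenvalues k * ‖⟪hM.eigenvectorBasis k, x⟫‖ ^ 2 := by
  set b := hM.eigenvectorBasis
  set c : Fin n → ℂ := fun k => ⟪b k, x⟫ with hc
  rw [mulVec_eq_sum hM x]
  rw [inner_sum]
  simp only [inner_smul_right]
  have h2 : ∀ k, (⟪x, b k⟫ : ℂ) = (starRingEnd ℂ) (c k) := fun k =>
    (inner_conj_symm x (b k)).symm
  change RCLike.re (∑ k, c k * (hM.eigenvalues k : ℂ) * ⟪x, b k⟫) = _
  simp only [h2]
  rw [map_sum]
  refine Finset.sum_congr rfl fun k _ => ?_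
  have : c k * (hM.eigenvalues k : ℂ) * (starRingEnd ℂ) (c k)
      = (hM.eigenvalues k : ℂ) * ((‖c k‖ : ℂ) ^ 2) := by
    rw [mul_comm (c k), mul_assoc, RCLike.mul_conj]
    rfl
  rw [this, ← Complex.ofReal_pow, ← Complex.ofReal_mul]
  exact RCLike.ofReal_re _

lemma rayleigh_le {M : Matrix (Fin n) (Fin n) ℂ} (hM : M.IsHermitian)
    (S : Finset (Fin n)) (t : ℝ) (h : ∀ k ∈ S, hM.eigenvalues k ≤ t)
    (x : EuclideanSpace ℂ (Fin n))
    (hx : x ∈ Submodule.span ℂ (hM.eigenvectorBasis '' (S : Set (Fin n)))) :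
    RCLike.re ⟪x, (WithLp.toLp 2 (M *ᵥ x) : EuclideanSpace ℂ (Fin n))⟫ ≤ t * ‖x‖ ^ 2 := by
  rw [re_inner_mulVec_eq, norm_sq_eq_sum_coeff hM.eigenvectorBasis, Finset.mul_sum]
  refine Finset.sum_le_sum fun k _ => ?_
  by_cases hk : k ∈ S
  · exact mul_le_mul_of_nonneg_right (h k hk) (by positivity)
  · rw [coeff_zero_of_mem_span _ S x hx hk]; simp

lemma rayleigh_ge {M : Matrix (Fin n) (Fin n) ℂ} (hM : M.IsHermitian)
    (S : Finset (Fin n)) (t : ℝ) (h : ∀ k ∈ S, t ≤ hM.eigenvalues k)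
    (x : EuclideanSpace ℂ (Fin n))
    (hx : x ∈ Submodule.span ℂ (hM.eigenvectorBasis '' (S : Set (Fin n)))) :
    t * ‖x‖ ^ 2 ≤ RCLike.re ⟪x, (WithLp.toLp 2 (M *ᵥ x) : EuclideanSpace ℂ (Fin n))⟫ := by
  rw [re_inner_mulVec_eq, norm_sq_eq_sum_coeff hM.eigenvectorBasis, Finset.mul_sum]
  refine Finset.sum_le_sum fun k _ => ?_
  by_cases hk : k ∈ S
  · exact mul_le_mul_of_nonneg_right (h k hk) (by positivity)
  · rw [coeff_zero_of_mem_span _ S x hx hk]; simp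

lemma finrank_span_basis_image (b : OrthonormalBasis (Fin n) ℂ (EuclideanSpace ℂ (Fin n)))
    (S : Finset (Fin n)) :
    Module.finrank ℂ (Submodule.span ℂ (b '' (S : Set (Fin n)))) = S.card := by
  have li : LinearIndependent ℂ (fun (x : (S : Set (Fin n))) => b ↑x) :=
    b.orthonormal.linearIndependent.comp _ Subtype.val_injective
  rw [Set.image_eq_range, finrank_span_eq_card li]
  simp

lemma exists_nonzero_mem_triple (p q r : Submodule ℂ (EuclideanSpace ℂ (Fin n)))
    (h : 2 * n + 1 ≤ Module.finrank ℂ p + Module.finrank ℂ q + Module.finrank ℂ r) :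
    ∃ x : EuclideanSpace ℂ (Fin n), x ≠ 0 ∧ x ∈ p ∧ x ∈ q ∧ x ∈ r := by
  have hn : Module.finrank ℂ (EuclideanSpace ℂ (Fin n)) = n := by
    simp [finrank_euclideanSpace]
  have key : ∀ a b : Submodule ℂ (EuclideanSpace ℂ (Fin n)),
      Module.finrank ℂ a + Module.finrank ℂ b ≤ Module.finrank ℂ (a ⊓ b : Submodule ℂ _) + n := by
    intro a b
    have := Submodule.finrank_sup_add_finrank_inf_eq a b
    have hle : Module.finrank ℂ (a ⊔ b : Submodule ℂ _) ≤ n := by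
      have := Submodule.finrank_le (a ⊔ b)
      rwa [hn] at this
    omega
  have h1 := key p q
  have h2 := key (p ⊓ q) r
  have hpos : 0 < Module.finrank ℂ ((p ⊓ q) ⊓ r : Submodule ℂ _) := by omega
  have hne : ((p ⊓ q) ⊓ r : Submodule ℂ _) ≠ ⊥ := by
    intro hb
    rw [hb, finrank_bot] at hpos
    exact lt_irrefl _ hpos
  obtain ⟨x, hx, hx0⟩ := Submodule.exists_mem_ne_zero_of_ne_bot hne
  exact ⟨x, hx0, hx.1.1, hx.1.2, hx.2⟩

end WeylAux

/-- `α` is the list of eigenvalues of the Hermitian matrix `A`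
in weakly decreasing order (with multiplicity). -/
def IsEigSeq {n : ℕ} (A : Matrix (Fin n) (Fin n) ℂ) (hA : A.IsHermitian)
    (α : Fin n → ℝ) : Prop :=
  Antitone α ∧ ∃ σ : Equiv.Perm (Fin n), ∀ i, α i = hA.eigenvalues (σ i)

/-- Weyl's inequality: for Hermitian `A`, `B` and `C = A + B` with decreasingly
ordered eigenvalues `α`, `β`, `γ`, one has `γ_{i+j-1} ≤ α_i + β_j` whenever
`i + j - 1 ≤ n` (here stated with 0-based indices: `γ_{i+j} ≤ α_i + β_j`
whenever `i + j < n`). -/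
theorem weyl_inequality {n : ℕ} (A B : Matrix (Fin n) (Fin n) ℂ)
    (hA : A.IsHermitian) (hB : B.IsHermitian) (hC : (A + B).IsHermitian)
    (α β γ : Fin n → ℝ)
    (hα : IsEigSeq A hA α) (hβ : IsEigSeq B hB β) (hγ : IsEigSeq (A + B) hC γ) :
    ∀ (i j : Fin n) (h : i.val + j.val < n),
      γ ⟨i.val + j.val, h⟩ ≤ α i + β j := by
  intro i j h
  obtain ⟨hαmono, σ, hσ⟩ := hα
  obtain ⟨hβmono, ρ, hρ⟩ := hβ
  obtain ⟨hγmono, τ, hτ⟩ := hγ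
  set k : Fin n := ⟨i.val + j.val, h⟩ with hk
  -- index sets
  set SA : Finset (Fin n) := (Finset.Ici i).image σ with hSA
  set SB : Finset (Fin n) := (Finset.Ici j).image ρ with hSB
  set SC : Finset (Fin n) := (Finset.Iic k).image τ with hSC
  -- subspaces
  set p := Submodule.span ℂ (hA.eigenvectorBasis '' (SA : Set (Fin n)))
  set q := Submodule.span ℂ (hB.eigenvectorBasis '' (SB : Set (Fin n)))
  set r := Submodule.span ℂ (hC.eigenvectorBasis '' (SC : Set (Fin n)))
  have hcardA : SA.card = n - i.val := by
    rw [hSA, Finset.card_image_of_injective _ σ.injective, Fin.card_Ici]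
  have hcardB : SB.card = n - j.val := by
    rw [hSB, Finset.card_image_of_injective _ ρ.injective, Fin.card_Ici]
  have hcardC : SC.card = i.val + j.val + 1 := by
    rw [hSC, Finset.card_image_of_injective _ τ.injective, Fin.card_Iic]
  obtain ⟨x, hx0, hxp, hxq, hxr⟩ := exists_nonzero_mem_triple p q r (by
    rw [finrank_span_basis_image, finrank_span_basis_image, finrank_span_basis_image,
      hcardA, hcardB, hcardC]
    have := i.isLt
    have := j.isLt
    omega)
  have hrpos : (0:ℝ) < ‖x‖ ^ 2 := pow_pos (norm_pos_iff.mpr hx0) 2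
  have hAle : RCLike.re ⟪x, (WithLp.toLp 2 (A *ᵥ x) : EuclideanSpace ℂ (Fin n))⟫ ≤ α i * ‖x‖ ^ 2 := by
    refine rayleigh_le hA SA (α i) ?_ x hxp
    intro m hm
    rw [hSA] at hm
    obtain ⟨l, hl, rfl⟩ := Finset.mem_image.mp hm
    rw [← hσ l]
    exact hαmono (Finset.mem_Ici.mp hl)
  have hBle : RCLike.re ⟪x, (WithLp.toLp 2 (B *ᵥ x) : EuclideanSpace ℂ (Fin n))⟫ ≤ β j * ‖x‖ ^ 2 := by
    refine rayleigh_le hB SB (β j) ?_ x hxq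
    intro m hm
    rw [hSB] at hm
    obtain ⟨l, hl, rfl⟩ := Finset.mem_image.mp hm
    rw [← hρ l]
    exact hβmono (Finset.mem_Ici.mp hl)
  have hCge : γ k * ‖x‖ ^ 2 ≤ RCLike.re ⟪x, (WithLp.toLp 2 ((A + B) *ᵥ x) : EuclideanSpace ℂ (Fin n))⟫ := by
    refine rayleigh_ge hC SC (γ k) ?_ x hxr
    intro m hm
    rw [hSC] at hm
    obtain ⟨l, hl, rfl⟩ := Finset.mem_image.mp hm
    rw [← hτ l]
    exact hγmono (Finset.mem_Iic.mp hl)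
  have hsplit : RCLike.re ⟪x, (WithLp.toLp 2 ((A + B) *ᵥ x) : EuclideanSpace ℂ (Fin n))⟫
      = RCLike.re ⟪x, (WithLp.toLp 2 (A *ᵥ x) : EuclideanSpace ℂ (Fin n))⟫
        + RCLike.re ⟪x, (WithLp.toLp 2 (B *ᵥ x) : EuclideanSpace ℂ (Fin n))⟫ := by
    have : (WithLp.toLp 2 ((A + B) *ᵥ x) : EuclideanSpace ℂ (Fin n))
        = (WithLp.toLp 2 (A *ᵥ x) : EuclideanSpace ℂ (Fin n)) + (WithLp.toLp 2 (B *ᵥ x) : EuclideanSpace ℂ (Fin n)) := by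
      rw [← WithLp.toLp_add]
      rw [Matrix.add_mulVec]
    rw [this, inner_add_right, map_add]
  have : γ k * ‖x‖ ^ 2 ≤ (α i + β j) * ‖x‖ ^ 2 := by
    calc γ k * ‖x‖ ^ 2 ≤ _ := hCge
    _ = _ := hsplit
    _ ≤ α i * ‖x‖ ^ 2 + β j * ‖x‖ ^ 2 := add_le_add hAle hBle
    _ = (α i + β j) * ‖x‖ ^ 2 := by ring
  exact le_of_mul_le_mul_right (by simpa [mul_comm] using this) hrpos
end

section
/- (Ky Fan's inequality) For n×n Hermitian matrices A, B and C = A + B, for every r < n the sum of the r largest eigenvalues of C is at most the sum of the r largest eigenvalues of A plus the sum of the r largest eigenvalues of B. -/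
open Matrix BigOperators

lemma card_filter_lt {n r : ℕ} (hr : r ≤ n) :
    (Finset.univ.filter (fun i : Fin n => i.val < r)).card = r := by
  have h : (Finset.univ.filter (fun i : Fin n => i.val < r)).image Fin.val
      = Finset.range r := by
    ext x
    simp only [Finset.mem_image, Finset.mem_filter, Finset.mem_univ, true_and,
      Finset.mem_range]
    constructor
    · rintro ⟨i, hi, rfl⟩; exact hi
    · intro hx; exact ⟨⟨x, lt_of_lt_of_le hx hr⟩, hx, rfl⟩
  rw [← Finset.card_image_of_injective _ Fin.val_injective, h, Finset.card_range]

lemma abel_bound {n r : ℕ} (hr : r < n) (α s : Fin n → ℝ) (hmono : Antitone α)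
    (h0 : ∀ i, 0 ≤ s i) (h1 : ∀ i, s i ≤ 1) (hsum : ∑ i, s i = r) :
    ∑ i, α i * s i ≤ ∑ i ∈ Finset.univ.filter (fun i : Fin n => i.val < r), α i := by
  set c := α ⟨r, hr⟩ with hc
  set T := Finset.univ.filter (fun i : Fin n => i.val < r) with hT
  have hsplit : ∑ i, α i * s i = ∑ i ∈ T, α i * s i + ∑ i ∈ Tᶜ, α i * s i :=
    (Finset.sum_add_sum_compl T _).symm
  have hsplit2 : (r : ℝ) = ∑ i ∈ T, s i + ∑ i ∈ Tᶜ, s i := by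
    rw [Finset.sum_add_sum_compl T s, hsum]
  have h1' : ∑ i ∈ T, α i * s i ≤ ∑ i ∈ T, (α i + c * (s i - 1)) := by
    apply Finset.sum_le_sum
    intro i hi
    have hir : i.val < r := by simpa [hT] using hi
    have hαc : c ≤ α i := hmono (by exact Fin.le_def.mpr (le_of_lt hir))
    nlinarith [h1 i, h0 i]
  have h2' : ∑ i ∈ Tᶜ, α i * s i ≤ ∑ i ∈ Tᶜ, c * s i := by
    apply Finset.sum_le_sum
    intro i hi
    have hir : ¬ i.val < r := by simpa [hT] using hi
    have hαc : α i ≤ c := hmono (Fin.le_def.mpr (by simp only [Fin.val_mk]; omega))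
    nlinarith [h0 i]
  have hcard : (T.card : ℝ) = r := by rw [hT, card_filter_lt hr.le]
  have : ∑ i ∈ T, (α i + c * (s i - 1)) + ∑ i ∈ Tᶜ, c * s i
      = ∑ i ∈ T, α i + c * ((∑ i ∈ T, s i + ∑ i ∈ Tᶜ, s i) - T.card) := by
    rw [Finset.sum_add_distrib,
      show ∑ x ∈ T, c * (s x - 1) = ∑ x ∈ T, (c * s x - c * 1) from
        Finset.sum_congr rfl fun x _ => by ring,
      Finset.sum_sub_distrib, Finset.sum_const, nsmul_eq_mul, ← Finset.mul_sum,
      ← Finset.mul_sum]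
    ring
  rw [hsplit]
  calc ∑ i ∈ T, α i * s i + ∑ i ∈ Tᶜ, α i * s i
      ≤ ∑ i ∈ T, (α i + c * (s i - 1)) + ∑ i ∈ Tᶜ, c * s i := add_le_add h1' h2'
    _ = ∑ i ∈ T, α i + c * ((∑ i ∈ T, s i + ∑ i ∈ Tᶜ, s i) - T.card) := this
    _ = ∑ i ∈ T, α i := by rw [← hsplit2, hcard]; ring_nf


lemma trace_form {n : ℕ} (a d : Fin n → ℂ) (G : Matrix (Fin n) (Fin n) ℂ) :
    trace (diagonal a * G * diagonal d * star G)
      = ∑ i, ∑ k, a i * d k * (G i k * star (G i k)) := by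
  simp only [Matrix.trace, Matrix.diag, Matrix.mul_apply, Matrix.diagonal_apply,
    Matrix.star_apply, ite_mul, zero_mul, mul_ite, mul_zero,
    Finset.sum_ite_eq, Finset.sum_ite_eq', Finset.mem_univ, if_true]
  refine Finset.sum_congr rfl fun i _ => Finset.sum_congr rfl fun k _ => by ring

-- row sums of |entries|² of a unitary matrix
lemma unitary_row {n : ℕ} (G : Matrix (Fin n) (Fin n) ℂ)
    (hG : G ∈ Matrix.unitaryGroup (Fin n) ℂ) (i : Fin n) :
    ∑ k, Complex.normSq (G i k) = 1 := by
  have h : (G * star G) i i = (1 : Matrix (Fin n) (Fin n) ℂ) i i := by rw [(mem_unitaryGroup_iff.mp hG)]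
  simp only [Matrix.mul_apply, Matrix.star_apply, Matrix.one_apply_eq] at h
  have : (↑(∑ k, Complex.normSq (G i k)) : ℂ) = 1 := by
    push_cast
    rw [← h]
    exact Finset.sum_congr rfl fun k _ => (Complex.mul_conj (G i k)).symm
  exact_mod_cast this

lemma unitary_col {n : ℕ} (G : Matrix (Fin n) (Fin n) ℂ)
    (hG : G ∈ Matrix.unitaryGroup (Fin n) ℂ) (k : Fin n) :
    ∑ i, Complex.normSq (G i k) = 1 := by
  have h : (star G * G) k k = (1 : Matrix (Fin n) (Fin n) ℂ) k k := by rw [(mem_unitaryGroup_iff'.mp hG)]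
  simp only [Matrix.mul_apply, Matrix.star_apply, Matrix.one_apply_eq] at h
  have : (↑(∑ i, Complex.normSq (G i k)) : ℂ) = 1 := by
    push_cast
    rw [← h]
    exact Finset.sum_congr rfl fun i _ => by rw [← Complex.mul_conj (G i k)]; exact (mul_comm _ _)
  exact_mod_cast this

lemma key_trace_bound {n r : ℕ} (hr : r < n) (A : Matrix (Fin n) (Fin n) ℂ)
    (hA : A.IsHermitian) (α : Fin n → ℝ) (hα : IsEigSeq A hA α)
    (V : Matrix (Fin n) (Fin n) ℂ) (hV : V ∈ Matrix.unitaryGroup (Fin n) ℂ)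
    (d : Fin n → ℝ) (hd : ∀ k, d k = 0 ∨ d k = 1) (hsum : ∑ k, d k = r) :
    (trace (A * (V * diagonal (fun k => (d k : ℂ)) * star V))).re
      ≤ ∑ i ∈ Finset.univ.filter (fun i : Fin n => i.val < r), α i := by
  obtain ⟨hmono, σ, hσ⟩ := hα
  set U : Matrix (Fin n) (Fin n) ℂ := (hA.eigenvectorUnitary : Matrix (Fin n) (Fin n) ℂ)
    with hUdef
  have hU : U ∈ Matrix.unitaryGroup (Fin n) ℂ := hA.eigenvectorUnitary.2
  set G : Matrix (Fin n) (Fin n) ℂ := star U * V with hGdef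
  have hG : G ∈ Matrix.unitaryGroup (Fin n) ℂ := mul_mem (Unitary.star_mem hU) hV
  have hUU : U * star U = 1 := mem_unitaryGroup_iff.mp hU
  have hUU' : star U * U = 1 := mem_unitaryGroup_iff'.mp hU
  set a : Fin n → ℂ := fun i => (hA.eigenvalues i : ℂ) with hadef
  set dc : Fin n → ℂ := fun k => (d k : ℂ) with hdcdef
  have e1 : A * (V * diagonal dc * star V)
      = U * (diagonal a * G * diagonal dc * star G) * star U := by
    have hAeq : A = U * diagonal a * star U := by
      have := hA.spectral_theorem
      rw [Unitary.conjStarAlgAut_apply] at this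
      exact this
    rw [hAeq, hGdef]
    simp only [Matrix.star_mul, star_star, Matrix.mul_assoc, hUU, Matrix.mul_one]
  have e2 : (trace (A * (V * diagonal dc * star V)))
      = trace (diagonal a * G * diagonal dc * star G) := by
    rw [e1, Matrix.trace_mul_cycle, ← Matrix.mul_assoc, hUU', Matrix.one_mul]
  set t : Fin n → ℝ := fun i => ∑ k, d k * Complex.normSq (G i k) with htdef
  have e3 : (trace (A * (V * diagonal dc * star V))).re = ∑ i, hA.eigenvalues i * t i := by
    rw [e2, trace_form]
    have : ∑ i, ∑ k, a i * dc k * (G i k * star (G i k))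
        = ((∑ i, hA.eigenvalues i * t i : ℝ) : ℂ) := by
      push_cast [htdef, Finset.mul_sum]
      refine Finset.sum_congr rfl fun i _ => Finset.sum_congr rfl fun k _ => ?_
      rw [show star (G i k) = (starRingEnd ℂ) (G i k) from rfl, Complex.mul_conj]
      ring
    rw [this, Complex.ofReal_re]
  rw [e3]
  have ht0 : ∀ i, 0 ≤ t i := fun i =>
    Finset.sum_nonneg fun k _ => mul_nonneg (by rcases hd k with h | h <;> simp [h])
      (Complex.normSq_nonneg _)
  have ht1 : ∀ i, t i ≤ 1 := by
    intro i
    calc t i ≤ ∑ k, Complex.normSq (G i k) := by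
          refine Finset.sum_le_sum fun k _ => ?_
          rcases hd k with h | h <;> simp [h, Complex.normSq_nonneg]
      _ = 1 := unitary_row G hG i
  have htsum : ∑ i, t i = r := by
    simp only [htdef]
    rw [Finset.sum_comm]
    calc ∑ k, ∑ i, d k * Complex.normSq (G i k)
        = ∑ k, d k * ∑ i, Complex.normSq (G i k) := by
          refine Finset.sum_congr rfl fun k _ => (Finset.mul_sum _ _ _).symm
      _ = ∑ k, d k := by
          refine Finset.sum_congr rfl fun k _ => by rw [unitary_col G hG k, mul_one]
      _ = r := hsum
  have hreindex : ∑ i, hA.eigenvalues i * t i = ∑ j, α j * t (σ j) := by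
    rw [← Equiv.sum_comp σ (fun i => hA.eigenvalues i * t i)]
    exact Finset.sum_congr rfl fun j _ => by rw [hσ j]
  rw [hreindex]
  exact abel_bound hr α (fun j => t (σ j)) hmono (fun j => ht0 _) (fun j => ht1 _)
    (by rw [Equiv.sum_comp σ t, htsum])

/-- Ky Fan's inequality: for Hermitian `A`, `B` and `C = A + B`, for every
`r < n` the sum of the `r` largest eigenvalues of `C` is at most the sum of
the `r` largest eigenvalues of `A` plus that of `B`. -/
theorem ky_fan_inequality {n : ℕ} (A B : Matrix (Fin n) (Fin n) ℂ)
    (hA : A.IsHermitian) (hB : B.IsHermitian) (hC : (A + B).IsHermitian)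
    (α β γ : Fin n → ℝ)
    (hα : IsEigSeq A hA α) (hβ : IsEigSeq B hB β) (hγ : IsEigSeq (A + B) hC γ) :
    ∀ r : ℕ, r < n →
      ∑ i ∈ Finset.univ.filter (fun i : Fin n => i.val < r), γ i ≤
        ∑ i ∈ Finset.univ.filter (fun i : Fin n => i.val < r), α i +
        ∑ i ∈ Finset.univ.filter (fun i : Fin n => i.val < r), β i := by
  intro r hr
  obtain ⟨hγmono, σ, hσ⟩ := hγ
  set V : Matrix (Fin n) (Fin n) ℂ := (hC.eigenvectorUnitary : Matrix (Fin n) (Fin n) ℂ)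
    with hVdef
  have hV : V ∈ Matrix.unitaryGroup (Fin n) ℂ := hC.eigenvectorUnitary.2
  have hVV : V * star V = 1 := mem_unitaryGroup_iff.mp hV
  have hVV' : star V * V = 1 := mem_unitaryGroup_iff'.mp hV
  set d : Fin n → ℝ := fun k => if (σ.symm k).val < r then 1 else 0 with hddef
  have hd : ∀ k, d k = 0 ∨ d k = 1 := by
    intro k; by_cases h : (σ.symm k).val < r <;> simp [hddef, h]
  have hdσ : ∀ j, d (σ j) = if j.val < r then 1 else 0 := by
    intro j; simp [hddef]
  have hsum : ∑ k, d k = r := by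
    rw [← Equiv.sum_comp σ d]
    simp only [hdσ]
    rw [Finset.sum_boole, card_filter_lt hr.le]
  set P : Matrix (Fin n) (Fin n) ℂ := V * diagonal (fun k => (d k : ℂ)) * star V with hPdef
  set c : Fin n → ℂ := fun i => (hC.eigenvalues i : ℂ) with hcdef
  have hCeq : A + B = V * diagonal c * star V := by
    have := hC.spectral_theorem
    rw [Unitary.conjStarAlgAut_apply] at this
    exact this
  -- exact value of trace (C * P)
  have etrace : (trace ((A + B) * P)).re
      = ∑ i ∈ Finset.univ.filter (fun i : Fin n => i.val < r), γ i := by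
    have e1 : (A + B) * P = V * (diagonal c * diagonal (fun k => (d k : ℂ))) * star V := by
      rw [hCeq, hPdef]
      simp only [Matrix.mul_assoc]
      rw [← Matrix.mul_assoc (star V) V, hVV', Matrix.one_mul]
    have e2 : trace ((A + B) * P) = ∑ i, c i * (d i : ℂ) := by
      rw [e1, Matrix.trace_mul_cycle, ← Matrix.mul_assoc, hVV', Matrix.one_mul,
        diagonal_mul_diagonal, trace_diagonal]
    have e3 : trace ((A + B) * P)
        = ((∑ i ∈ Finset.univ.filter (fun i : Fin n => i.val < r), γ i : ℝ) : ℂ) := by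
      rw [e2, ← Equiv.sum_comp σ (fun i => c i * (d i : ℂ))]
      push_cast
      rw [Finset.sum_filter]
      refine Finset.sum_congr rfl fun j _ => ?_
      rw [hσ j, hdσ j]
      by_cases h : j.val < r <;> simp [h, hcdef]
    rw [e3, Complex.ofReal_re]
  have esplit : (trace ((A + B) * P)).re = (trace (A * P)).re + (trace (B * P)).re := by
    rw [add_mul, trace_add, Complex.add_re]
  rw [← etrace, esplit]
  exact add_le_add
    (key_trace_bound hr A hA α hα V hV d hd hsum)
    (key_trace_bound hr B hB β hβ V hV d hd hsum)
end

section
/- (Rank perturbation interlacing) If A and B are n×n Hermitian matrices with rank(A − B) ≤ r, then their decreasingly ordered eigenvalues satisfy α_{k+r} ≤ β_k and β_{k+r} ≤ α_k for all k with k + r ≤ n. -/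
open Matrix BigOperators

section Aux

open Matrix BigOperators Module

variable {n : ℕ}

noncomputable abbrev eB {A : Matrix (Fin n) (Fin n) ℂ} (hA : A.IsHermitian) :=
  hA.eigenvectorBasis

lemma repr_toEuclideanLin {A : Matrix (Fin n) (Fin n) ℂ} (hA : A.IsHermitian)
    (x : EuclideanSpace ℂ (Fin n)) (j : Fin n) :
    (eB hA).repr (Matrix.toEuclideanLin A x) j
      = (hA.eigenvalues j : ℂ) * (eB hA).repr x j := by
  have hsym := (Matrix.isHermitian_iff_isSymmetric).1 hA
  rw [OrthonormalBasis.repr_apply_apply, OrthonormalBasis.repr_apply_apply,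
    ← hsym (eB hA j) x]
  have hb : Matrix.toEuclideanLin A (eB hA j) = (hA.eigenvalues j : ℝ) • (eB hA j) := by
    apply (WithLp.equiv 2 _).injective
    simpa [Matrix.toEuclideanLin_apply] using hA.mulVec_eigenvectorBasis j
  rw [hb, RCLike.real_smul_eq_coe_smul (K := ℂ), inner_smul_left, RCLike.conj_ofReal]
  rfl

lemma re_inner_toEuclideanLin {A : Matrix (Fin n) (Fin n) ℂ} (hA : A.IsHermitian)
    (x : EuclideanSpace ℂ (Fin n)) :
    RCLike.re (inner ℂ x (Matrix.toEuclideanLin A x) : ℂ)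
      = ∑ j, hA.eigenvalues j * ‖(eB hA).repr x j‖ ^ 2 := by
  rw [← (eB hA).repr.inner_map_map x (Matrix.toEuclideanLin A x)]
  rw [PiLp.inner_apply]
  rw [map_sum]
  congr 1
  ext j
  rw [repr_toEuclideanLin hA x j]
  have h1 : (inner ℂ ((eB hA).repr x j) ((hA.eigenvalues j : ℂ) * (eB hA).repr x j) : ℂ)
      = (hA.eigenvalues j : ℂ) * ((‖(eB hA).repr x j‖ : ℂ) ^ 2) := by
    rw [RCLike.inner_apply]
    calc (hA.eigenvalues j : ℂ) * (eB hA).repr x j * (starRingEnd ℂ) ((eB hA).repr x j)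
        = (hA.eigenvalues j : ℂ) *
          ((starRingEnd ℂ) ((eB hA).repr x j) * (eB hA).repr x j) := by ring
      _ = _ := by rw [RCLike.conj_mul]; push_cast; ring_nf; rfl
  rw [h1]
  norm_cast

lemma norm_sq_eq_sum {A : Matrix (Fin n) (Fin n) ℂ} (hA : A.IsHermitian)
    (x : EuclideanSpace ℂ (Fin n)) :
    ‖x‖ ^ 2 = ∑ j, ‖(eB hA).repr x j‖ ^ 2 := by
  rw [← (eB hA).repr.norm_map x]
  rw [EuclideanSpace.norm_eq]
  rw [Real.sq_sqrt (by positivity)]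

lemma repr_eq_zero_of_mem_span {A : Matrix (Fin n) (Fin n) ℂ} (hA : A.IsHermitian)
    (T : Finset (Fin n)) {x : EuclideanSpace ℂ (Fin n)}
    (hx : x ∈ Submodule.span ℂ ((eB hA) '' ↑T)) {j : Fin n} (hj : j ∉ T) :
    (eB hA).repr x j = 0 := by
  induction hx using Submodule.span_induction with
  | mem v hv =>
    obtain ⟨i, hi, rfl⟩ := hv
    rw [OrthonormalBasis.repr_self]
    have hij : j ≠ i := fun h => hj (h ▸ hi)
    rw [EuclideanSpace.single_apply, if_neg hij]
  | zero => simp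
  | add u v _ _ hu hv => rw [map_add]; rw [show ∀ y z : EuclideanSpace ℂ (Fin n),
      (y + z) j = y j + z j from fun _ _ => rfl, hu, hv, add_zero]
  | smul c v _ hv => rw [_root_.map_smul]; rw [show ∀ (c : ℂ) (z : EuclideanSpace ℂ (Fin n)),
      (c • z) j = c * z j from fun _ _ => rfl, hv, mul_zero]

lemma finrank_span_eB {A : Matrix (Fin n) (Fin n) ℂ} (hA : A.IsHermitian)
    (T : Finset (Fin n)) :
    finrank ℂ (Submodule.span ℂ ((eB hA) '' ↑T)) = T.card := by
  have li : LinearIndependent ℂ (fun i : (T : Set (Fin n)) => eB hA i) :=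
    ((eB hA).orthonormal.linearIndependent).comp _ Subtype.val_injective
  have : (eB hA) '' ↑T = Set.range (fun i : (T : Set (Fin n)) => eB hA i) := by
    rw [← Set.image_eq_range]
  rw [this, finrank_span_eq_card li]
  simp

lemma rank_add_finrank_ker (M : Matrix (Fin n) (Fin n) ℂ) :
    M.rank + finrank ℂ (LinearMap.ker (Matrix.toEuclideanLin M)) = n := by
  rw [M.rank_eq_finrank_range_toLin (PiLp.basisFun 2 ℂ (Fin n)) (PiLp.basisFun 2 ℂ (Fin n))]
  have h1 : Matrix.toLin (PiLp.basisFun 2 ℂ (Fin n)) (PiLp.basisFun 2 ℂ (Fin n)) M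
      = Matrix.toEuclideanLin M := by
    rw [Matrix.toEuclideanLin_eq_toLin]
  rw [h1]
  have := LinearMap.finrank_range_add_finrank_ker (Matrix.toEuclideanLin M)
  rw [this]
  simp [finrank_euclideanSpace]

lemma rayleigh_lower {A : Matrix (Fin n) (Fin n) ℂ} (hA : A.IsHermitian)
    (T : Finset (Fin n)) (t : ℝ) (ht : ∀ j ∈ T, t ≤ hA.eigenvalues j)
    {x : EuclideanSpace ℂ (Fin n)} (hx : x ∈ Submodule.span ℂ ((eB hA) '' ↑T)) :
    t * ‖x‖ ^ 2 ≤ RCLike.re (inner ℂ x (Matrix.toEuclideanLin A x) : ℂ) := by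
  rw [re_inner_toEuclideanLin hA, norm_sq_eq_sum hA, Finset.mul_sum]
  apply Finset.sum_le_sum
  intro j _
  by_cases hj : j ∈ T
  · exact mul_le_mul_of_nonneg_right (ht j hj) (by positivity)
  · rw [repr_eq_zero_of_mem_span hA T hx hj]; simp

lemma rayleigh_upper {A : Matrix (Fin n) (Fin n) ℂ} (hA : A.IsHermitian)
    (T : Finset (Fin n)) (t : ℝ) (ht : ∀ j ∈ T, hA.eigenvalues j ≤ t)
    {x : EuclideanSpace ℂ (Fin n)} (hx : x ∈ Submodule.span ℂ ((eB hA) '' ↑T)) :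
    RCLike.re (inner ℂ x (Matrix.toEuclideanLin A x) : ℂ) ≤ t * ‖x‖ ^ 2 := by
  rw [re_inner_toEuclideanLin hA, norm_sq_eq_sum hA, Finset.mul_sum]
  apply Finset.sum_le_sum
  intro j _
  by_cases hj : j ∈ T
  · exact mul_le_mul_of_nonneg_right (ht j hj) (by positivity)
  · rw [repr_eq_zero_of_mem_span hA T hx hj]; simp

lemma matrix_rank_neg (M : Matrix (Fin n) (Fin n) ℂ) : (-M).rank = M.rank := by
  have h : (-M).mulVecLin = -(M.mulVecLin) := by
    ext v i
    simp [Matrix.mulVecLin_apply, Matrix.neg_mulVec]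
  rw [Matrix.rank, h, LinearMap.range_neg, Matrix.rank]


lemma one_side {n : ℕ} (r : ℕ) (A B : Matrix (Fin n) (Fin n) ℂ)
    (hA : A.IsHermitian) (hB : B.IsHermitian)
    (hrank : (A - B).rank ≤ r) (α β : Fin n → ℝ)
    (hα : IsEigSeq A hA α) (hβ : IsEigSeq B hB β) :
    ∀ (k : Fin n) (h : k.val + r < n), α ⟨k.val + r, h⟩ ≤ β k := by
  intro k h
  obtain ⟨hαm, σ, hσ⟩ := hα
  obtain ⟨hβm, τ, hτ⟩ := hβ
  set t := α ⟨k.val + r, h⟩ with ht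
  set s := β k with hs
  set TA : Finset (Fin n) := Finset.univ.filter (fun j => t ≤ hA.eigenvalues j) with hTAdef
  set TB : Finset (Fin n) := Finset.univ.filter (fun j => hB.eigenvalues j ≤ s) with hTBdef
  have hTA : k.val + r + 1 ≤ TA.card := by
    have := Finset.card_le_card_of_injOn σ (fun i hi => ?_) σ.injective.injOn
      (s := Finset.Iic (⟨k.val + r, h⟩ : Fin n)) (t := TA)
    · simpa using this
    · simp only [hTAdef, Finset.mem_coe, Finset.mem_filter, Finset.mem_univ, true_and]
      rw [← hσ i]
      exact hαm (Finset.mem_Iic.1 hi)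
  have hTB : n - k.val ≤ TB.card := by
    have := Finset.card_le_card_of_injOn τ (fun i hi => ?_) τ.injective.injOn
      (s := Finset.Ici k) (t := TB)
    · simpa using this
    · simp only [hTBdef, Finset.mem_coe, Finset.mem_filter, Finset.mem_univ, true_and]
      rw [← hτ i]
      exact hβm (Finset.mem_Ici.1 hi)
  set U := Submodule.span ℂ ((eB hA) '' ↑TA) with hU
  set V := Submodule.span ℂ ((eB hB) '' ↑TB) with hV
  set K := LinearMap.ker (Matrix.toEuclideanLin (A - B)) with hK
  have hfU : finrank ℂ U = TA.card := finrank_span_eB hA TA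
  have hfV : finrank ℂ V = TB.card := finrank_span_eB hB TB
  have hfK : (A - B).rank + finrank ℂ K = n := rank_add_finrank_ker (A - B)
  have hE : finrank ℂ (EuclideanSpace ℂ (Fin n)) = n := by
    simp [finrank_euclideanSpace]
  have h1 := Submodule.finrank_sup_add_finrank_inf_eq U V
  have h2 := Submodule.finrank_sup_add_finrank_inf_eq (U ⊓ V) K
  have hle1 : finrank ℂ ↥(U ⊔ V) ≤ n := le_trans (Submodule.finrank_le _) (le_of_eq hE)
  have hle2 : finrank ℂ ↥(U ⊓ V ⊔ K) ≤ n := le_trans (Submodule.finrank_le _) (le_of_eq hE)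
  have hpos : 1 ≤ finrank ℂ ↥(U ⊓ V ⊓ K) := by omega
  have hnebot : U ⊓ V ⊓ K ≠ ⊥ := by
    intro hbot
    rw [hbot, finrank_bot] at hpos
    omega
  obtain ⟨x, hxmem, hx0⟩ := Submodule.exists_mem_ne_zero_of_ne_bot hnebot
  have hxU : x ∈ U := hxmem.1.1
  have hxV : x ∈ V := hxmem.1.2
  have hxK : x ∈ K := hxmem.2
  have hAB : Matrix.toEuclideanLin A x = Matrix.toEuclideanLin B x := by
    have h0 : Matrix.toEuclideanLin (A - B) x = 0 := LinearMap.mem_ker.1 hxK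
    rw [map_sub] at h0
    have : (Matrix.toEuclideanLin A - Matrix.toEuclideanLin B) x = 0 := h0
    rw [LinearMap.sub_apply, sub_eq_zero] at this
    exact this
  have hL : t * ‖x‖ ^ 2 ≤ RCLike.re (inner ℂ x (Matrix.toEuclideanLin A x) : ℂ) :=
    rayleigh_lower hA TA t
      (fun j hj => (Finset.mem_filter.1 hj).2) hxU
  have hR : RCLike.re (inner ℂ x (Matrix.toEuclideanLin B x) : ℂ) ≤ s * ‖x‖ ^ 2 :=
    rayleigh_upper hB TB s
      (fun j hj => (Finset.mem_filter.1 hj).2) hxV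
  rw [hAB] at hL
  have hx2 : (0:ℝ) < ‖x‖ ^ 2 := by
    have : 0 < ‖x‖ := norm_pos_iff.2 hx0
    positivity
  exact le_of_mul_le_mul_right (hL.trans hR) hx2

end Aux

/-- Rank perturbation interlacing: if Hermitian `A` and `B` differ by a matrix
of rank at most `r`, then their decreasingly ordered eigenvalues satisfy
`α_{k+r} ≤ β_k` and `β_{k+r} ≤ α_k` whenever `k + r ≤ n`
(0-based indices here). -/
theorem rank_perturbation_interlacing {n : ℕ} (r : ℕ)
    (A B : Matrix (Fin n) (Fin n) ℂ)
    (hA : A.IsHermitian) (hB : B.IsHermitian)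
    (hrank : (A - B).rank ≤ r)
    (α β : Fin n → ℝ)
    (hα : IsEigSeq A hA α) (hβ : IsEigSeq B hB β) :
    ∀ (k : Fin n) (h : k.val + r < n),
      α ⟨k.val + r, h⟩ ≤ β k ∧ β ⟨k.val + r, h⟩ ≤ α k := by
  intro k h
  refine ⟨one_side r A B hA hB hrank α β hα hβ k h, ?_⟩
  have hrank' : (B - A).rank ≤ r := by
    rw [(neg_sub A B).symm, matrix_rank_neg]
    exact hrank
  exact one_side r B A hB hA hrank' β α hβ hα k h
end

section
/- For n = 2, the conditions γ₁ + γ₂ = α₁ + α₂ + β₁ + β₂, γ₁ ≤ α₁ + β₁, γ₂ ≤ α₂ + β₁, and γ₂ ≤ α₁ + β₂ are necessary and sufficient for the existence of 2×2 Hermitian matrices A, B, C = A + B with eigenvalues α₁ ≥ α₂, β₁ ≥ β₂, γ₁ ≥ γ₂ respectively. -/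
open Matrix BigOperators

lemma herm_trace_eq {n : ℕ} (A : Matrix (Fin n) (Fin n) ℂ) (hA : A.IsHermitian) :
    A.trace = ∑ i, (hA.eigenvalues i : ℂ) := by
  conv_lhs => rw [hA.spectral_theorem]
  rw [Unitary.conjStarAlgAut_apply]
  rw [Matrix.trace_mul_cycle]
  rw [show (star (hA.eigenvectorUnitary : Matrix (Fin n) (Fin n) ℂ)) *
      (hA.eigenvectorUnitary : Matrix (Fin n) (Fin n) ℂ) = 1 from ?_]
  · simp [Matrix.trace_diagonal]
  · exact hA.eigenvectorUnitary.2.1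

lemma antitone_pair {x y : ℝ} (h : y ≤ x) : Antitone ![x, y] := by
  intro i j hij
  fin_cases i <;> fin_cases j <;> simp_all

lemma isEigSeq_of_trace_det (A : Matrix (Fin 2) (Fin 2) ℂ) (hA : A.IsHermitian) (x y : ℝ)
    (hxy : y ≤ x) (htr : A.trace = ((x + y : ℝ) : ℂ)) (hdet : A.det = ((x * y : ℝ) : ℂ)) :
    IsEigSeq A hA ![x, y] := by
  have hs : hA.eigenvalues 0 + hA.eigenvalues 1 = x + y := by
    have h1 := (herm_trace_eq A hA).symm.trans htr
    rw [Fin.sum_univ_two] at h1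
    exact_mod_cast h1
  have hp : hA.eigenvalues 0 * hA.eigenvalues 1 = x * y := by
    have h1 := hA.det_eq_prod_eigenvalues.symm.trans hdet
    rw [Fin.prod_univ_two] at h1
    have h2 : ((hA.eigenvalues 0 : ℂ)) * ((hA.eigenvalues 1 : ℂ)) = ((x * y : ℝ) : ℂ) := h1
    exact_mod_cast h2
  have hz : (hA.eigenvalues 0 - x) * (hA.eigenvalues 0 - y) = 0 := by
    linear_combination hA.eigenvalues 0 * hs - hp
  refine ⟨antitone_pair hxy, ?_⟩
  rcases mul_eq_zero.1 hz with h | h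
  · exact ⟨Equiv.refl _, by
      intro i; fin_cases i <;> simp_all <;> linarith⟩
  · exact ⟨Equiv.swap 0 1, by
      intro i; fin_cases i <;> simp [Equiv.swap_apply_left, Equiv.swap_apply_right] <;> linarith⟩

lemma quad_expand (A : Matrix (Fin 2) (Fin 2) ℂ) (hA : A.IsHermitian)
    (v : Fin 2 → ℂ) :
    ∃ n0 n1 : ℝ, 0 ≤ n0 ∧ 0 ≤ n1 ∧
      (star v ⬝ᵥ v).re = n0 + n1 ∧
      (star v ⬝ᵥ (A *ᵥ v)).re = hA.eigenvalues 0 * n0 + hA.eigenvalues 1 * n1 := by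
  set U : Matrix (Fin 2) (Fin 2) ℂ := (hA.eigenvectorUnitary : Matrix (Fin 2) (Fin 2) ℂ)
    with hUdef
  have hU : U * star U = 1 := hA.eigenvectorUnitary.2.2
  set w : Fin 2 → ℂ := star U *ᵥ v with hw
  have hsw : star w = star v ᵥ* U := by
    rw [hw, Matrix.star_mulVec, Matrix.star_eq_conjTranspose, Matrix.conjTranspose_conjTranspose]
  refine ⟨Complex.normSq (w 0), Complex.normSq (w 1), Complex.normSq_nonneg _,
    Complex.normSq_nonneg _, ?_, ?_⟩
  · have h1 : star w ⬝ᵥ w = star v ⬝ᵥ v := by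
      rw [hsw, Matrix.dotProduct_mulVec, Matrix.vecMul_vecMul, hU, Matrix.vecMul_one]
    rw [← h1]
    simp [dotProduct, Fin.sum_univ_two, Complex.normSq_apply, Complex.mul_re]
  · have key : star v ⬝ᵥ (A *ᵥ v)
        = star w ⬝ᵥ (Matrix.diagonal (RCLike.ofReal ∘ hA.eigenvalues) *ᵥ w) := by
      conv_lhs => rw [hA.spectral_theorem]
      rw [Unitary.conjStarAlgAut_apply]
      rw [← Matrix.mulVec_mulVec, ← Matrix.mulVec_mulVec, Matrix.dotProduct_mulVec (star v),
        ← hsw, ← hUdef]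
    rw [key]
    simp [dotProduct, Matrix.mulVec, Fin.sum_univ_two, Matrix.diagonal,
      Complex.normSq_apply, Complex.mul_re, Complex.ofReal_re, Complex.ofReal_im]
    ring

lemma exists_unit_eigvec (A : Matrix (Fin 2) (Fin 2) ℂ) (hA : A.IsHermitian) (i : Fin 2) :
    ∃ v : Fin 2 → ℂ, (star v ⬝ᵥ v).re = 1 ∧ (star v ⬝ᵥ (A *ᵥ v)).re = hA.eigenvalues i := by
  refine ⟨⇑(hA.eigenvectorBasis i), ?_, (hA.eigenvalues_eq i).symm⟩
  have h := hA.eigenvectorBasis.orthonormal.1 i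
  have h2 : (inner ℂ (hA.eigenvectorBasis i) (hA.eigenvectorBasis i) : ℂ) = 1 := by
    rw [inner_self_eq_norm_sq_to_K, h]
    norm_num
  rw [EuclideanSpace.inner_eq_star_dotProduct] at h2
  simpa using congrArg Complex.re h2

lemma eigseq_vals (A : Matrix (Fin 2) (Fin 2) ℂ) (hA : A.IsHermitian) (x y : ℝ)
    (h : IsEigSeq A hA ![x, y]) :
    (hA.eigenvalues 0 = x ∧ hA.eigenvalues 1 = y) ∨
    (hA.eigenvalues 0 = y ∧ hA.eigenvalues 1 = x) := by
  obtain ⟨-, σ, hσ⟩ := h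
  have h0 := hσ 0
  have h1 := hσ 1
  simp only [Matrix.cons_val_zero, Matrix.cons_val_one, Matrix.head_cons] at h0 h1
  have hne : σ 0 ≠ σ 1 := fun h => by simpa using σ.injective h
  have key : ∀ a b : Fin 2, a ≠ b → (a = 0 ∧ b = 1) ∨ (a = 1 ∧ b = 0) := by decide
  rcases key _ _ hne with ⟨hc, hc1⟩ | ⟨hc, hc1⟩
  · left
    rw [hc] at h0; rw [hc1] at h1
    exact ⟨h0.symm, h1.symm⟩
  · right
    rw [hc] at h0; rw [hc1] at h1
    exact ⟨h1.symm, h0.symm⟩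

lemma eigseq_sum (A : Matrix (Fin 2) (Fin 2) ℂ) (hA : A.IsHermitian) (x y : ℝ)
    (h : IsEigSeq A hA ![x, y]) :
    hA.eigenvalues 0 + hA.eigenvalues 1 = x + y := by
  rcases eigseq_vals A hA x y h with ⟨h0, h1⟩ | ⟨h0, h1⟩ <;> rw [h0, h1] <;> ring

lemma quad_le_of_eigseq (A : Matrix (Fin 2) (Fin 2) ℂ) (hA : A.IsHermitian) (x y : ℝ)
    (hxy : y ≤ x) (h : IsEigSeq A hA ![x, y]) (v : Fin 2 → ℂ)
    (hv : (star v ⬝ᵥ v).re = 1) :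
    y ≤ (star v ⬝ᵥ (A *ᵥ v)).re ∧ (star v ⬝ᵥ (A *ᵥ v)).re ≤ x := by
  obtain ⟨n0, n1, h0, h1, hsum, hq⟩ := quad_expand A hA v
  rw [hv] at hsum
  rcases eigseq_vals A hA x y h with ⟨e0, e1⟩ | ⟨e0, e1⟩ <;> rw [e0, e1] at hq
  · have key1 : x * n0 + y * n1 - y = (x - y) * n0 := by linear_combination (-y) * hsum
    have key2 : x - (x * n0 + y * n1) = (x - y) * n1 := by linear_combination x * hsum
    constructor <;> rw [hq]
    · linarith [key1, mul_nonneg (sub_nonneg.2 hxy) h0]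
    · linarith [key2, mul_nonneg (sub_nonneg.2 hxy) h1]
  · have key1 : y * n0 + x * n1 - y = (x - y) * n1 := by linear_combination (-y) * hsum
    have key2 : x - (y * n0 + x * n1) = (x - y) * n0 := by linear_combination x * hsum
    constructor <;> rw [hq]
    · linarith [key1, mul_nonneg (sub_nonneg.2 hxy) h1]
    · linarith [key2, mul_nonneg (sub_nonneg.2 hxy) h0]

/-- For `n = 2`, the conditions `γ₁ + γ₂ = α₁ + α₂ + β₁ + β₂`,
`γ₁ ≤ α₁ + β₁`, `γ₂ ≤ α₂ + β₁`, `γ₂ ≤ α₁ + β₂` are necessary and sufficient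
for the existence of `2×2` Hermitian matrices `A`, `B`, `C = A + B` with
eigenvalues `α₁ ≥ α₂`, `β₁ ≥ β₂`, `γ₁ ≥ γ₂`. -/
theorem two_by_two_eigenvalue_characterization
    (α₁ α₂ β₁ β₂ γ₁ γ₂ : ℝ)
    (hα : α₂ ≤ α₁) (hβ : β₂ ≤ β₁) (hγ : γ₂ ≤ γ₁) :
    (γ₁ + γ₂ = α₁ + α₂ + β₁ + β₂ ∧ γ₁ ≤ α₁ + β₁ ∧ γ₂ ≤ α₂ + β₁ ∧ γ₂ ≤ α₁ + β₂) ↔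
    (∃ (A B : Matrix (Fin 2) (Fin 2) ℂ) (hA : A.IsHermitian) (hB : B.IsHermitian)
        (hC : (A + B).IsHermitian),
      IsEigSeq A hA ![α₁, α₂] ∧ IsEigSeq B hB ![β₁, β₂] ∧
        IsEigSeq (A + B) hC ![γ₁, γ₂]) := by
  constructor
  · rintro ⟨hsum, h1, h2, h3⟩
    -- construct t
    obtain ⟨t, ht0, ht1, hteq⟩ : ∃ t : ℝ, 0 ≤ t ∧ t ≤ β₁ - β₂ ∧
        (α₁ + β₂) * (α₂ + β₁) + t * (α₂ - α₁) = γ₁ * γ₂ := by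
      rcases eq_or_lt_of_le hα with heq | hlt
      · refine ⟨0, le_refl _, by linarith, ?_⟩
        have e1 : γ₁ = α₁ + β₁ := by linarith
        have e2 : γ₂ = α₁ + β₂ := by linarith
        rw [e1, e2, heq]; ring
      · refine ⟨((α₁ + β₂) * (α₂ + β₁) - γ₁ * γ₂) / (α₁ - α₂), ?_, ?_, ?_⟩
        · apply div_nonneg _ (by linarith)
          have hp : α₁ + β₂ ≤ γ₁ := by linarith
          have hq : α₂ + β₁ ≤ γ₁ := by linarith
          have key : (α₁ + β₂) * (α₂ + β₁) - γ₁ * γ₂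
              = (γ₁ - (α₁ + β₂)) * (γ₁ - (α₂ + β₁)) := by
            linear_combination (-γ₁) * hsum
          rw [key]
          exact mul_nonneg (by linarith) (by linarith)
        · rw [div_le_iff₀ (by linarith)]
          have hw : α₂ + β₂ ≤ γ₁ := by linarith
          have key : (α₁ + β₂) * (α₂ + β₁) - γ₁ * γ₂
              = (β₁ - β₂) * (α₁ - α₂) - (α₁ + β₁ - γ₁) * (γ₁ - (α₂ + β₂)) := by
            linear_combination (-γ₁) * hsum
          rw [key]
          nlinarith [mul_nonneg (sub_nonneg.2 h1) (sub_nonneg.2 hw)]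
        · have hne : α₁ - α₂ ≠ 0 := by linarith
          field_simp
          ring
    set c : ℝ := Real.sqrt (t * (β₁ - β₂ - t)) with hc
    have hc2 : c * c = t * (β₁ - β₂ - t) :=
      Real.mul_self_sqrt (by nlinarith)
    set A : Matrix (Fin 2) (Fin 2) ℂ := !![(α₁ : ℂ), 0; 0, (α₂ : ℂ)] with hAdef
    set B : Matrix (Fin 2) (Fin 2) ℂ :=
      !![((β₂ + t : ℝ) : ℂ), (c : ℂ); (c : ℂ), ((β₁ - t : ℝ) : ℂ)] with hBdef
    have hA : A.IsHermitian := by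
      show Aᴴ = A
      rw [hAdef]
      ext i j
      fin_cases i <;> fin_cases j <;>
        simp [Matrix.conjTranspose_apply, Complex.conj_ofReal]
    have hB : B.IsHermitian := by
      show Bᴴ = B
      rw [hBdef]
      ext i j
      fin_cases i <;> fin_cases j <;>
        simp [Matrix.conjTranspose_apply, Complex.conj_ofReal]
    have hC : (A + B).IsHermitian := hA.add hB
    have hCeq : A + B = !![((α₁ + β₂ + t : ℝ) : ℂ), (c : ℂ);
        (c : ℂ), ((α₂ + β₁ - t : ℝ) : ℂ)] := by
      rw [hAdef, hBdef]
      ext i j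
      fin_cases i <;> fin_cases j <;> simp <;> push_cast <;> ring
    refine ⟨A, B, hA, hB, hC, ?_, ?_, ?_⟩
    · apply isEigSeq_of_trace_det A hA α₁ α₂ hα
      · rw [hAdef, Matrix.trace_fin_two_of]; push_cast; ring
      · rw [hAdef, Matrix.det_fin_two_of]; push_cast; ring
    · apply isEigSeq_of_trace_det B hB β₁ β₂ hβ
      · rw [hBdef, Matrix.trace_fin_two_of]; push_cast; ring
      · rw [hBdef, Matrix.det_fin_two_of]
        have hcC : (c : ℂ) * (c : ℂ) = (t : ℂ) * ((β₁ : ℂ) - (β₂ : ℂ) - (t : ℂ)) := by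
          exact_mod_cast congrArg Complex.ofReal hc2
        push_cast
        linear_combination -hcC
    · apply isEigSeq_of_trace_det _ hC γ₁ γ₂ hγ
      · rw [hCeq, Matrix.trace_fin_two_of]
        have hsC : ((γ₁ : ℂ) + γ₂) = (α₁ : ℂ) + α₂ + β₁ + β₂ := by
          exact_mod_cast congrArg Complex.ofReal hsum
        push_cast
        linear_combination -hsC
      · rw [hCeq, Matrix.det_fin_two_of]
        have hr : (α₁ + β₂ + t) * (α₂ + β₁ - t) - c * c = γ₁ * γ₂ := by
          linear_combination hteq - hc2
        calc ((α₁ + β₂ + t : ℝ) : ℂ) * ((α₂ + β₁ - t : ℝ) : ℂ) - (c : ℂ) * (c : ℂ)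
            = (((α₁ + β₂ + t) * (α₂ + β₁ - t) - c * c : ℝ) : ℂ) := by push_cast; ring
          _ = ((γ₁ * γ₂ : ℝ) : ℂ) := by rw [hr]
  · rintro ⟨A, B, hA, hB, hC, hEA, hEB, hEC⟩
    have quad_add : ∀ v : Fin 2 → ℂ,
        (star v ⬝ᵥ ((A + B) *ᵥ v)).re = (star v ⬝ᵥ (A *ᵥ v)).re + (star v ⬝ᵥ (B *ᵥ v)).re := by
      intro v
      rw [Matrix.add_mulVec, dotProduct_add, Complex.add_re]
    refine ⟨?_, ?_, ?_, ?_⟩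
    · -- trace identity
      have tA := eigseq_sum A hA α₁ α₂ hEA
      have tB := eigseq_sum B hB β₁ β₂ hEB
      have tC := eigseq_sum _ hC γ₁ γ₂ hEC
      have e1 : (A + B).trace = A.trace + B.trace := Matrix.trace_add _ _
      rw [herm_trace_eq _ hC, herm_trace_eq _ hA, herm_trace_eq _ hB] at e1
      rw [Fin.sum_univ_two, Fin.sum_univ_two, Fin.sum_univ_two] at e1
      have e1' : hC.eigenvalues 0 + hC.eigenvalues 1
          = hA.eigenvalues 0 + hA.eigenvalues 1 + (hB.eigenvalues 0 + hB.eigenvalues 1) := by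
        exact_mod_cast e1
      linarith [tA, tB, tC, e1']
    · -- γ₁ ≤ α₁ + β₁
      obtain ⟨i, hi⟩ : ∃ i, hC.eigenvalues i = γ₁ := by
        rcases eigseq_vals _ hC γ₁ γ₂ hEC with ⟨h0, _⟩ | ⟨_, h0⟩
        exacts [⟨0, h0⟩, ⟨1, h0⟩]
      obtain ⟨v, hv1, hv2⟩ := exists_unit_eigvec _ hC i
      have qa := (quad_le_of_eigseq A hA α₁ α₂ hα hEA v hv1).2
      have qb := (quad_le_of_eigseq B hB β₁ β₂ hβ hEB v hv1).2
      have := quad_add v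
      rw [hv2, hi] at this
      linarith
    · -- γ₂ ≤ α₂ + β₁
      obtain ⟨i, hi⟩ : ∃ i, hA.eigenvalues i = α₂ := by
        rcases eigseq_vals A hA α₁ α₂ hEA with ⟨_, h0⟩ | ⟨h0, _⟩
        exacts [⟨1, h0⟩, ⟨0, h0⟩]
      obtain ⟨v, hv1, hv2⟩ := exists_unit_eigvec A hA i
      have qb := (quad_le_of_eigseq B hB β₁ β₂ hβ hEB v hv1).2
      have qc := (quad_le_of_eigseq _ hC γ₁ γ₂ hγ hEC v hv1).1
      have := quad_add v
      rw [hv2, hi] at this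
      linarith
    · -- γ₂ ≤ α₁ + β₂
      obtain ⟨i, hi⟩ : ∃ i, hB.eigenvalues i = β₂ := by
        rcases eigseq_vals B hB β₁ β₂ hEB with ⟨_, h0⟩ | ⟨h0, _⟩
        exacts [⟨1, h0⟩, ⟨0, h0⟩]
      obtain ⟨v, hv1, hv2⟩ := exists_unit_eigvec B hB i
      have qa := (quad_le_of_eigseq A hA α₁ α₂ hα hEA v hv1).2
      have qc := (quad_le_of_eigseq _ hC γ₁ γ₂ hγ hEC v hv1).1
      have := quad_add v
      rw [hv2, hi] at this
      linarith
end

section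
/- For any weakly decreasing real sequences α, β, γ of length 6 with ∑γ_i = ∑α_i + ∑β_i, the inequality γ₂ + γ₄ + γ₆ ≤ α₁ + α₃ + α₅ + β₁ + β₃ + β₅ holds. -/
open BigOperators

/-- For weakly decreasing real sequences `α`, `β`, `γ` of length 6 with
`∑γ = ∑α + ∑β`, one has `γ₂ + γ₄ + γ₆ ≤ α₁ + α₃ + α₅ + β₁ + β₃ + β₅`
(1-based indices). -/
theorem even_odd_redundant_inequality
    (α β γ : Fin 6 → ℝ)
    (hα : Antitone α) (hβ : Antitone β) (hγ : Antitone γ)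
    (htrace : ∑ i, γ i = ∑ i, α i + ∑ i, β i) :
    γ 1 + γ 3 + γ 5 ≤ α 0 + α 2 + α 4 + (β 0 + β 2 + β 4) := by
  simp only [Fin.sum_univ_six] at htrace
  have a1 := hα (show (0:Fin 6) ≤ 1 by decide)
  have a3 := hα (show (2:Fin 6) ≤ 3 by decide)
  have a5 := hα (show (4:Fin 6) ≤ 5 by decide)
  have b1 := hβ (show (0:Fin 6) ≤ 1 by decide)
  have b3 := hβ (show (2:Fin 6) ≤ 3 by decide)
  have b5 := hβ (show (4:Fin 6) ≤ 5 by decide)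
  have g1 := hγ (show (0:Fin 6) ≤ 1 by decide)
  have g3 := hγ (show (2:Fin 6) ≤ 3 by decide)
  have g5 := hγ (show (4:Fin 6) ≤ 5 by decide)
  linarith
end

section
/- (Rayleigh trace lower bound) Let A be an n×n Hermitian matrix with eigenvalues α₁ ≥ … ≥ αₙ and orthonormal eigenvectors v₁,…,vₙ, and let F_k be the span of v₁,…,v_k. If L is an r-dimensional subspace of ℂⁿ with dim(L ∩ F_{i_p}) ≥ p for 1 ≤ p ≤ r (where i₁ < … < i_r), then for any orthonormal basis u₁,…,u_r of L, the Rayleigh trace ∑_{p=1}^r ⟨A u_p, u_p⟩ ≥ ∑_{p=1}^r α_{i_p}. -/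
open Matrix BigOperators

private lemma abel_aux (a e : ℕ → ℝ) (ha : ∀ k l : ℕ, k ≤ l → a l ≤ a k) :
    ∀ m : ℕ, (∀ k ≤ m, 0 ≤ ∑ j ∈ Finset.range k, e j) →
      a (m - 1) * (∑ j ∈ Finset.range m, e j) ≤ ∑ j ∈ Finset.range m, a j * e j := by
  intro m
  induction m with
  | zero => simp
  | succ m ih =>
    intro h
    have h1 := ih (fun k hk => h k (hk.trans (Nat.le_succ m)))
    have hE : 0 ≤ ∑ j ∈ Finset.range m, e j := h m (Nat.le_succ m)
    have h2 : a m * (∑ j ∈ Finset.range m, e j) ≤ a (m-1) * (∑ j ∈ Finset.range m, e j) :=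
      mul_le_mul_of_nonneg_right (ha _ _ (Nat.sub_le m 1)) hE
    rw [Finset.sum_range_succ, Finset.sum_range_succ, Nat.succ_sub_one, mul_add]
    linarith

private lemma key_real {n r : ℕ} (α : Fin n → ℝ) (hα : Antitone α)
    (t : Fin n → ℝ) (ht0 : ∀ j, 0 ≤ t j)
    (htot : ∑ j, t j = (r : ℝ))
    (i : Fin r → Fin n) (hi : StrictMono i)
    (hpart : ∀ p : Fin r, (p.val + 1 : ℝ) ≤ ∑ j ∈ Finset.Iic (i p), t j) :
    ∑ p, α (i p) ≤ ∑ j, α j * t j := by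
  classical
  rcases Nat.eq_zero_or_pos n with rfl | hn
  · haveI : IsEmpty (Fin r) := Function.isEmpty i
    simp
  set a : ℕ → ℝ := fun m => α ⟨min m (n-1), by omega⟩ with ha_def
  set t' : ℕ → ℝ := fun m => if h : m < n then t ⟨m, h⟩ else 0 with ht'_def
  set ts : ℕ → ℝ := fun m => if ∃ p, ((i p : ℕ) = m) then 1 else 0 with hts_def
  have ha_fin : ∀ j : Fin n, a (j : ℕ) = α j := by
    intro j; simp only [ha_def]; congr 1; exact Fin.ext (by simp; omega)
  have ha_anti : ∀ k l : ℕ, k ≤ l → a l ≤ a k := by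
    intro k l hkl
    apply hα
    simp only [Fin.mk_le_mk]
    omega
  have ht'sum : ∀ k, ∑ j ∈ Finset.range k, t' j
      = ∑ j ∈ Finset.univ.filter (fun j : Fin n => (j : ℕ) < k), t j := by
    intro k
    induction k with
    | zero => simp
    | succ k ih =>
      rw [Finset.sum_range_succ, ih]
      by_cases hk : k < n
      · have hins : Finset.univ.filter (fun j : Fin n => (j : ℕ) < k + 1)
            = insert (⟨k, hk⟩ : Fin n) (Finset.univ.filter (fun j : Fin n => (j : ℕ) < k)) := by
          ext j
          simp only [Finset.mem_filter, Finset.mem_insert, Finset.mem_univ, true_and, Fin.ext_iff]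
          omega
        rw [hins, Finset.sum_insert (by simp)]
        have : t' k = t ⟨k, hk⟩ := dif_pos hk
        rw [this]; ring
      · have h1 : t' k = 0 := dif_neg hk
        have h2 : Finset.univ.filter (fun j : Fin n => (j : ℕ) < k + 1)
            = Finset.univ.filter (fun j : Fin n => (j : ℕ) < k) := by
          ext j; simp only [Finset.mem_filter, Finset.mem_univ, true_and]
          have := j.isLt; omega
        rw [h1, h2, add_zero]
  have htssum : ∀ k, ∑ j ∈ Finset.range k, ts j
      = ((Finset.univ.filter (fun p : Fin r => (i p : ℕ) < k)).card : ℝ) := by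
    intro k
    induction k with
    | zero => simp
    | succ k ih =>
      rw [Finset.sum_range_succ, ih]
      by_cases hk : ∃ p, (i p : ℕ) = k
      · obtain ⟨p₀, hp₀⟩ := hk
        have hins : Finset.univ.filter (fun p : Fin r => (i p : ℕ) < k + 1)
            = insert p₀ (Finset.univ.filter (fun p : Fin r => (i p : ℕ) < k)) := by
          ext p
          simp only [Finset.mem_filter, Finset.mem_insert, Finset.mem_univ, true_and]
          constructor
          · intro hp
            rcases Nat.lt_succ_iff_lt_or_eq.mp hp with h | h
            · exact Or.inr h
            · left
              exact hi.injective (Fin.val_injective (h.trans hp₀.symm))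
          · rintro (rfl | hp) <;> omega
        have hnotmem : p₀ ∉ Finset.univ.filter (fun p : Fin r => (i p : ℕ) < k) := by
          simp [hp₀]
        rw [hins, Finset.card_insert_of_notMem hnotmem]
        have : ts k = 1 := if_pos ⟨p₀, hp₀⟩
        rw [this]; push_cast; ring
      · have h1 : ts k = 0 := if_neg hk
        have h2 : Finset.univ.filter (fun p : Fin r => (i p : ℕ) < k + 1)
            = Finset.univ.filter (fun p : Fin r => (i p : ℕ) < k) := by
          ext p; simp only [Finset.mem_filter, Finset.mem_univ, true_and]
          have : (i p : ℕ) ≠ k := fun h => hk ⟨p, h⟩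
          omega
        rw [h1, h2, add_zero]
  have htot' : ∑ j ∈ Finset.range n, t' j = (r : ℝ) := by
    rw [ht'sum]
    rw [show Finset.univ.filter (fun j : Fin n => (j : ℕ) < n) = Finset.univ by
      ext j; simp [j.isLt]]
    exact htot
  have htstot : ∑ j ∈ Finset.range n, ts j = (r : ℝ) := by
    rw [htssum]
    rw [show Finset.univ.filter (fun p : Fin r => (i p : ℕ) < n) = Finset.univ by
      ext p; simp [(i p).isLt]]
    simp
  have hpartial : ∀ k, k ≤ n → ∑ j ∈ Finset.range k, ts j ≤ ∑ j ∈ Finset.range k, t' j := by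
    intro k hk
    rw [ht'sum, htssum]
    set s := Finset.univ.filter (fun p : Fin r => (i p : ℕ) < k) with hs_def
    rcases s.eq_empty_or_nonempty with hs | hs
    · rw [hs]
      simp only [Finset.card_empty, Nat.cast_zero]
      exact Finset.sum_nonneg fun j _ => ht0 j
    · set p₀ := s.max' hs with hp₀_def
      have hp₀ : (i p₀ : ℕ) < k := (Finset.mem_filter.mp (s.max'_mem hs)).2
      have hcard : (s.card : ℝ) ≤ (p₀ : ℕ) + 1 := by
        have hsub : s ⊆ Finset.Iic p₀ := fun p hp => Finset.mem_Iic.mpr (s.le_max' p hp)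
        have := Finset.card_le_card hsub
        rw [Fin.card_Iic] at this
        exact_mod_cast this
      refine hcard.trans ((hpart p₀).trans ?_)
      refine Finset.sum_le_sum_of_subset_of_nonneg ?_ (fun j _ _ => ht0 j)
      intro j hj
      simp only [Finset.mem_Iic] at hj
      simp only [Finset.mem_filter, Finset.mem_univ, true_and]
      have : (j : ℕ) ≤ (i p₀ : ℕ) := hj
      omega
  have hzero : ∑ j ∈ Finset.range n, (t' j - ts j) = 0 := by
    rw [Finset.sum_sub_distrib, htot', htstot, sub_self]
  have key : 0 ≤ ∑ j ∈ Finset.range n, a j * (t' j - ts j) := by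
    have h := abel_aux a (fun m => t' m - ts m) ha_anti n (fun k hk => by
      rw [Finset.sum_sub_distrib]
      have := hpartial k hk
      linarith)
    rw [hzero, mul_zero] at h
    exact h
  have hts_fin : ∀ j : Fin n, ts (j : ℕ) = if ∃ p, i p = j then 1 else 0 := by
    intro j
    simp only [hts_def]
    congr 1
    simp only [eq_iff_iff]
    constructor
    · rintro ⟨p, hp⟩; exact ⟨p, Fin.ext hp⟩
    · rintro ⟨p, rfl⟩; exact ⟨p, rfl⟩
  have ht'_fin : ∀ j : Fin n, t' (j : ℕ) = t j := by
    intro j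
    simp only [ht'_def, j.isLt, dif_pos]
  have hexpand : ∑ j ∈ Finset.range n, a j * (t' j - ts j)
      = ∑ j, α j * t j - ∑ p, α (i p) := by
    rw [← Fin.sum_univ_eq_sum_range (fun m => a m * (t' m - ts m)) n]
    have : ∀ j : Fin n, a (j : ℕ) * (t' (j : ℕ) - ts (j : ℕ))
        = α j * t j - α j * (if ∃ p, i p = j then 1 else 0) := by
      intro j
      rw [ha_fin, ht'_fin, hts_fin]
      ring
    rw [Finset.sum_congr rfl fun j _ => this j, Finset.sum_sub_distrib]
    congr 1
    have h1 : ∑ j : Fin n, α j * (if ∃ p, i p = j then 1 else 0)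
        = ∑ j ∈ Finset.univ.filter (fun j : Fin n => ∃ p, i p = j), α j := by
      rw [Finset.sum_filter]
      refine Finset.sum_congr rfl fun j _ => ?_
      split <;> ring
    have h2 : Finset.univ.filter (fun j : Fin n => ∃ p, i p = j)
        = Finset.image i Finset.univ := by
      ext j
      simp [eq_comm]
    rw [h1, h2, Finset.sum_image (fun p _ q _ h => hi.injective h)]
  linarith [key, hexpand.symm ▸ key]


private lemma parseval_span {N m : ℕ} {U : Fin m → EuclideanSpace ℂ (Fin N)}
    (hU : Orthonormal ℂ U) {x : EuclideanSpace ℂ (Fin N)}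
    (hx : x ∈ Submodule.span ℂ (Set.range U)) :
    ∑ p, ‖(inner ℂ (U p) x : ℂ)‖ ^ 2 = ‖x‖ ^ 2 := by
  obtain ⟨c, rfl⟩ := (Submodule.mem_span_range_iff_exists_fun ℂ).mp hx
  have h2 : (inner ℂ (∑ q, c q • U q) (∑ q, c q • U q) : ℂ)
      = ∑ p, (starRingEnd ℂ) (c p) * c p := hU.inner_sum c c Finset.univ
  rw [← inner_self_eq_norm_sq (𝕜 := ℂ), h2, map_sum]
  refine Finset.sum_congr rfl fun p _ => ?_
  rw [hU.inner_right_fintype c p, RCLike.conj_mul]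
  norm_cast

/-- Rayleigh trace lower bound (Hersch–Zwahlen): if `A` is Hermitian with
eigenvalues `α₁ ≥ … ≥ αₙ` and orthonormal eigenvectors `v₁,…,vₙ`,
`F_k = span(v₁,…,v_k)`, and `L` is an `r`-dimensional subspace with
`dim (L ⊓ F_{i_p}) ≥ p` for all `p` (where `i₁ < … < i_r`), then for any
orthonormal basis `u₁,…,u_r` of `L` one has
`∑_p α_{i_p} ≤ ∑_p ⟨A u_p, u_p⟩`. -/
theorem rayleigh_trace_lower_bound {n r : ℕ}
    (A : Matrix (Fin n) (Fin n) ℂ) (hA : A.IsHermitian)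
    (α : Fin n → ℝ) (hαmono : Antitone α)
    (v : Fin n → (Fin n → ℂ))
    (hv : ∀ p q, star (v p) ⬝ᵥ v q = if p = q then 1 else 0)
    (heig : ∀ k, A.mulVec (v k) = (α k : ℂ) • v k)
    (i : Fin r → Fin n) (hi : StrictMono i)
    (L : Submodule ℂ (Fin n → ℂ)) (hL : Module.finrank ℂ L = r)
    (hSch : ∀ p : Fin r, p.val + 1 ≤
      Module.finrank ℂ ↥(L ⊓ Submodule.span ℂ {x | ∃ j, j ≤ i p ∧ x = v j}))
    (u : Fin r → (Fin n → ℂ))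
    (hu : ∀ p q, star (u p) ⬝ᵥ u q = if p = q then 1 else 0)
    (huL : ∀ p, u p ∈ L)
    (hspan : Submodule.span ℂ (Set.range u) = L) :
    ∑ p, α (i p) ≤ ∑ p, (star (u p) ⬝ᵥ A.mulVec (u p)).re := by
  classical
  rcases Nat.eq_zero_or_pos n with rfl | hn
  · haveI : IsEmpty (Fin r) := Function.isEmpty i
    rw [Finset.univ_eq_empty, Finset.sum_empty, Finset.sum_empty]
  set e : (Fin n → ℂ) ≃ₗ[ℂ] EuclideanSpace ℂ (Fin n) :=
    (WithLp.linearEquiv 2 ℂ (Fin n → ℂ)).symm with he_def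
  have hinner : ∀ x y : Fin n → ℂ, (inner ℂ (e x) (e y) : ℂ) = star x ⬝ᵥ y := fun x y => by
    simp [he_def, PiLp.inner_apply, dotProduct, mul_comm]
  set V : Fin n → EuclideanSpace ℂ (Fin n) := fun j => e (v j) with hV_def
  set U : Fin r → EuclideanSpace ℂ (Fin n) := fun p => e (u p) with hU_def
  have hVorth : Orthonormal ℂ V := by
    rw [orthonormal_iff_ite]
    intro j k
    rw [hV_def]; rw [hinner, hv j k]
  have hUorth : Orthonormal ℂ U := by
    rw [orthonormal_iff_ite]
    intro p q
    rw [hU_def]; rw [hinner, hu p q]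
  have hVtop : Submodule.span ℂ (Set.range V) = ⊤ :=
    hVorth.linearIndependent.span_eq_top_of_card_eq_finrank' (by simp)
  have hPar : ∀ x : EuclideanSpace ℂ (Fin n), ∑ j, ‖(inner ℂ (V j) x : ℂ)‖ ^ 2 = ‖x‖ ^ 2 :=
    fun x => parseval_span hVorth (by rw [hVtop]; exact Submodule.mem_top)
  set t : Fin n → ℝ := fun j => ∑ p, ‖(inner ℂ (V j) (U p) : ℂ)‖ ^ 2 with ht_def
  have ht0 : ∀ j, 0 ≤ t j := fun j => Finset.sum_nonneg fun p _ => by positivity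
  have hUnorm : ∀ p, ‖U p‖ ^ 2 = 1 := by
    intro p
    rw [← inner_self_eq_norm_sq (𝕜 := ℂ), hU_def]
    rw [hinner, hu p p, if_pos rfl]
    simp
  have htot : ∑ j, t j = (r : ℝ) := by
    rw [ht_def, Finset.sum_comm]
    rw [Finset.sum_congr rfl fun p _ => hPar (U p)]
    rw [Finset.sum_congr rfl fun p _ => hUnorm p]
    simp
  -- Rayleigh expansion
  set T : EuclideanSpace ℂ (Fin n) →ₗ[ℂ] EuclideanSpace ℂ (Fin n) :=
    e.toLinearMap ∘ₗ A.mulVecLin ∘ₗ e.symm.toLinearMap with hT_def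
  have hTV : ∀ j, T (V j) = (α j : ℂ) • V j := by
    intro j
    simp only [hT_def, hV_def, LinearMap.coe_comp, Function.comp_apply,
      LinearEquiv.coe_coe, LinearEquiv.symm_apply_apply, Matrix.mulVecLin_apply]
    rw [heig j, _root_.map_smul]
  have hrepr : ∀ x : EuclideanSpace ℂ (Fin n), x = ∑ j, (inner ℂ (V j) x : ℂ) • V j := by
    intro x
    obtain ⟨c, hc⟩ := (Submodule.mem_span_range_iff_exists_fun ℂ).mp
      (by rw [hVtop]; exact Submodule.mem_top : x ∈ Submodule.span ℂ (Set.range V))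
    conv_lhs => rw [← hc]
    rw [← hc]
    exact (Finset.sum_congr rfl fun j _ => by rw [hVorth.inner_right_fintype c j]).symm
  have hray : ∀ p, (star (u p) ⬝ᵥ A.mulVec (u p)).re
      = ∑ j, α j * ‖(inner ℂ (V j) (U p) : ℂ)‖ ^ 2 := by
    intro p
    set c : Fin n → ℂ := fun j => (inner ℂ (V j) (U p) : ℂ) with hc_def
    have h0 : star (u p) ⬝ᵥ A.mulVec (u p) = (inner ℂ (U p) (T (U p)) : ℂ) := by
      have hTe : T (U p) = e (A.mulVec (u p)) := by
        simp only [hT_def, hU_def, LinearMap.coe_comp, Function.comp_apply,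
          LinearEquiv.coe_coe, LinearEquiv.symm_apply_apply, Matrix.mulVecLin_apply]
      rw [hTe, hU_def, hinner]
    have hUr : U p = ∑ j, c j • V j := hrepr (U p)
    have hTU : T (U p) = ∑ j, (c j * (α j : ℂ)) • V j := by
      conv_lhs => rw [hUr]
      rw [map_sum]
      refine Finset.sum_congr rfl fun j _ => ?_
      rw [LinearMap.map_smul, hTV j, smul_smul, mul_comm]
    have hin : (inner ℂ (U p) (T (U p)) : ℂ)
        = ∑ j, (starRingEnd ℂ) (c j) * (c j * (α j : ℂ)) := by
      conv_lhs => rw [hTU, hUr]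
      exact hVorth.inner_sum c (fun j => c j * (α j : ℂ)) Finset.univ
    rw [h0, hin, Complex.re_sum]
    refine Finset.sum_congr rfl fun j _ => ?_
    rw [← mul_assoc, RCLike.conj_mul]
    simp only [hc_def]
    simp [← Complex.ofReal_pow]
    ring
  -- Schubert partial sums
  have hUspan : Submodule.map e.toLinearMap L = Submodule.span ℂ (Set.range U) := by
    rw [← hspan, Submodule.map_span, ← Set.range_comp]
    rfl
  have hkey : ∀ p : Fin r, ((p : ℕ) + 1 : ℝ) ≤ ∑ j ∈ Finset.Iic (i p), t j := by
    intro p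
    set k := i p with hk_def
    set F := Submodule.span ℂ {x | ∃ j, j ≤ k ∧ x = v j} with hF_def
    set M := (L ⊓ F).map e.toLinearMap with hM_def
    have hMrank : (p : ℕ) + 1 ≤ Module.finrank ℂ M := by
      rw [hM_def, LinearEquiv.finrank_map_eq]
      exact hSch p
    set B := stdOrthonormalBasis ℂ M with hB_def
    set W : Fin ((p : ℕ) + 1) → EuclideanSpace ℂ (Fin n) :=
      fun q => (B (Fin.castLE hMrank q) : EuclideanSpace ℂ (Fin n)) with hW_def
    have hWmem : ∀ q, W q ∈ M := fun q => SetLike.coe_mem _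
    have hWorth : Orthonormal ℂ W := by
      rw [orthonormal_iff_ite]
      intro q q'
      have h := orthonormal_iff_ite.mp B.orthonormal (Fin.castLE hMrank q) (Fin.castLE hMrank q')
      rw [Submodule.coe_inner] at h
      rw [hW_def]
      rw [h]
      congr 1
      simp only [eq_iff_iff, Fin.castLE_inj]
    have hWnorm : ∀ q, ‖W q‖ ^ 2 = 1 := by
      intro q
      rw [← inner_self_eq_norm_sq (𝕜 := ℂ)]
      rw [orthonormal_iff_ite.mp hWorth q q, if_pos rfl]
      simp
    have hWU : ∀ q, W q ∈ Submodule.span ℂ (Set.range U) := by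
      intro q
      rw [← hUspan]
      obtain ⟨m, hm, hem⟩ := hWmem q
      exact ⟨m, hm.1, hem⟩
    have hWF : ∀ q, W q ∈ Submodule.map e.toLinearMap F := by
      intro q
      obtain ⟨m, hm, hem⟩ := hWmem q
      exact ⟨m, hm.2, hem⟩
    have hperp : ∀ j : Fin n, ¬ j ≤ k → ∀ y ∈ Submodule.map e.toLinearMap F,
        (inner ℂ (V j) y : ℂ) = 0 := by
      intro j hj y hy
      rw [hF_def, Submodule.map_span] at hy
      induction hy using Submodule.span_induction with
      | mem x hx =>
        obtain ⟨x', ⟨l, hl, rfl⟩, rfl⟩ := hx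
        show (inner ℂ (V j) (e (v l)) : ℂ) = 0
        rw [hV_def, hinner, hv j l, if_neg (fun h => hj (by rw [h]; exact hl))]
      | zero => exact inner_zero_right _
      | add x y _ _ hx hy => rw [inner_add_right, hx, hy, add_zero]
      | smul a x _ hx => rw [inner_smul_right, hx, mul_zero]
    have hA1 : ∑ q, ∑ p', ‖(inner ℂ (W q) (U p') : ℂ)‖ ^ 2 = ((p : ℕ) + 1 : ℝ) := by
      have hq : ∀ q, ∑ p', ‖(inner ℂ (W q) (U p') : ℂ)‖ ^ 2 = ‖W q‖ ^ 2 := by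
        intro q
        rw [← parseval_span hUorth (hWU q)]
        exact Finset.sum_congr rfl fun p' _ => by rw [norm_inner_symm]
      rw [Finset.sum_congr rfl fun q _ => hq q]
      rw [Finset.sum_congr rfl fun q _ => hWnorm q]
      simp
    have hB1 : ∀ p' : Fin r, ∑ q, ‖(inner ℂ (W q) (U p') : ℂ)‖ ^ 2
        ≤ ∑ j ∈ Finset.Iic k, ‖(inner ℂ (V j) (U p') : ℂ)‖ ^ 2 := by
      intro p'
      set G : Fin ((p : ℕ) + 1) ⊕ {j : Fin n // ¬ j ≤ k} → EuclideanSpace ℂ (Fin n) :=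
        Sum.elim W (fun j => V j.1) with hG_def
      have hGorth : Orthonormal ℂ G := by
        rw [orthonormal_iff_ite]
        rintro (q | j) (q' | j')
        · simp only [hG_def, Sum.elim_inl, Sum.inl.injEq]
          rw [orthonormal_iff_ite.mp hWorth q q']
        · simp only [hG_def, Sum.elim_inl, Sum.elim_inr]
          rw [if_neg (by simp)]
          rw [← inner_conj_symm, hperp j'.1 j'.2 (W q) (hWF q), map_zero]
        · simp only [hG_def, Sum.elim_inl, Sum.elim_inr]
          rw [if_neg (by simp)]
          exact hperp j.1 j.2 (W q') (hWF q')
        · simp only [hG_def, Sum.elim_inr, Sum.inr.injEq]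
          rw [hV_def]
          rw [hinner, hv j.1 j'.1]
          congr 1
          simp only [eq_iff_iff]
          exact ⟨fun h => Subtype.ext h, fun h => congrArg Subtype.val h⟩
      have hbessel := hGorth.sum_inner_products_le (U p') (s := Finset.univ)
      rw [Fintype.sum_sum_type] at hbessel
      rw [← hPar (U p')] at hbessel
      have hsplit : ∑ j : Fin n, ‖(inner ℂ (V j) (U p') : ℂ)‖ ^ 2
          = (∑ j ∈ Finset.Iic k, ‖(inner ℂ (V j) (U p') : ℂ)‖ ^ 2)
            + ∑ j : {j : Fin n // ¬ j ≤ k}, ‖(inner ℂ (V j.1) (U p') : ℂ)‖ ^ 2 := by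
        rw [← Finset.sum_filter_add_sum_filter_not Finset.univ (fun j => j ≤ k)
          (fun j => ‖(inner ℂ (V j) (U p') : ℂ)‖ ^ 2)]
        congr 1
        · congr 1
          ext j
          simp
        · rw [← Finset.sum_subtype (Finset.univ.filter (fun j => ¬ j ≤ k)) (by simp)
            (fun j => ‖(inner ℂ (V j) (U p') : ℂ)‖ ^ 2)]
      rw [hsplit] at hbessel
      have heq : ∑ b : {j : Fin n // ¬ j ≤ k}, ‖(inner ℂ (G (Sum.inr b)) (U p') : ℂ)‖ ^ 2
          = ∑ j : {j : Fin n // ¬ j ≤ k}, ‖(inner ℂ (V j.1) (U p') : ℂ)‖ ^ 2 := rfl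
      have heq2 : ∑ a, ‖(inner ℂ (G (Sum.inl a)) (U p') : ℂ)‖ ^ 2
          = ∑ q, ‖(inner ℂ (W q) (U p') : ℂ)‖ ^ 2 := rfl
      rw [heq, heq2] at hbessel
      linarith
    calc ((p : ℕ) + 1 : ℝ) = ∑ q, ∑ p', ‖(inner ℂ (W q) (U p') : ℂ)‖ ^ 2 := hA1.symm
      _ = ∑ p', ∑ q, ‖(inner ℂ (W q) (U p') : ℂ)‖ ^ 2 := Finset.sum_comm
      _ ≤ ∑ p' : Fin r, ∑ j ∈ Finset.Iic k, ‖(inner ℂ (V j) (U p') : ℂ)‖ ^ 2 :=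
          Finset.sum_le_sum fun p' _ => hB1 p'
      _ = ∑ j ∈ Finset.Iic k, t j := Finset.sum_comm
  -- assemble
  have hmain := key_real α hαmono t ht0 htot i hi hkey
  refine hmain.trans (le_of_eq ?_)
  rw [Finset.sum_congr rfl fun p (_ : p ∈ Finset.univ) => hray p]
  rw [Finset.sum_comm]
  refine Finset.sum_congr rfl fun j _ => ?_
  rw [ht_def, Finset.mul_sum]
end

section
/- (Inclusion principle / Cauchy interlacing for compressions) Let A be an n×n Hermitian matrix with eigenvalues α₁ ≥ … ≥ αₙ, L ⊆ ℂⁿ a subspace of dimension r, and A_L : L → L the compression of A to L (inclusion followed by A followed by orthogonal projection onto L), with eigenvalues α₁^L ≥ … ≥ α_r^L. Then α_{n−r+k} ≤ α_k^L ≤ α_k for 1 ≤ k ≤ r. -/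
open Matrix BigOperators Complex

section aux
variable {m : ℕ}

lemma dot_self_re_eq (x : Fin m → ℂ) :
    (star x ⬝ᵥ x).re = ∑ i, Complex.normSq (x i) := by
  have : star x ⬝ᵥ x = ((∑ i, Complex.normSq (x i) : ℝ) : ℂ) := by
    simp [dotProduct, ← Complex.normSq_eq_conj_mul_self]
  rw [this, Complex.ofReal_re]

lemma dot_self_re_pos {x : Fin m → ℂ} (hx : x ≠ 0) : 0 < (star x ⬝ᵥ x).re := by
  rw [dot_self_re_eq]
  have h : ∃ i, x i ≠ 0 := by
    by_contra h; push_neg at h; exact hx (funext h)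
  obtain ⟨i, hi⟩ := h
  exact Finset.sum_pos' (fun j _ => Complex.normSq_nonneg _)
    ⟨i, Finset.mem_univ i, Complex.normSq_pos.2 hi⟩

lemma dot_sum_sum {ι : Type*} [Fintype ι] (v w : ι → Fin m → ℂ) (f g : ι → ℂ) :
    star (∑ i, f i • v i) ⬝ᵥ (∑ j, g j • w j)
      = ∑ i, ∑ j, (starRingEnd ℂ) (f i) * g j * (star (v i) ⬝ᵥ w j) := by
  calc star (∑ i, f i • v i) ⬝ᵥ (∑ j, g j • w j)
      = ∑ x, ∑ i, ∑ j, (starRingEnd ℂ) (f i) * (starRingEnd ℂ) (v i x) * (g j * w j x) := by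
        simp [dotProduct, Finset.sum_apply, star_sum, Finset.sum_mul, Finset.mul_sum,
          mul_comm, mul_left_comm]
    _ = ∑ i, ∑ x, ∑ j, (starRingEnd ℂ) (f i) * (starRingEnd ℂ) (v i x) * (g j * w j x) :=
        Finset.sum_comm
    _ = ∑ i, ∑ j, ∑ x, (starRingEnd ℂ) (f i) * (starRingEnd ℂ) (v i x) * (g j * w j x) := by
        exact Finset.sum_congr rfl fun i _ => Finset.sum_comm
    _ = ∑ i, ∑ j, (starRingEnd ℂ) (f i) * g j * (star (v i) ⬝ᵥ w j) := by
        refine Finset.sum_congr rfl fun i _ => Finset.sum_congr rfl fun j _ => ?_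
        simp [dotProduct, Finset.mul_sum]
        refine Finset.sum_congr rfl fun x _ => by ring

end aux

lemma dot_sum_right {m : ℕ} (v : Fin m → ℂ) {ι : Type*} [Fintype ι]
    (w : ι → Fin m → ℂ) (g : ι → ℂ) :
    v ⬝ᵥ (∑ j, g j • w j) = ∑ j, g j * (v ⬝ᵥ w j) := by
  calc v ⬝ᵥ (∑ j, g j • w j) = ∑ x, ∑ j, v x * (g j * w j x) := by
        simp [dotProduct, Finset.sum_apply, Finset.mul_sum]
    _ = ∑ j, ∑ x, v x * (g j * w j x) := Finset.sum_comm
    _ = ∑ j, g j * (v ⬝ᵥ w j) := by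
        refine Finset.sum_congr rfl fun j _ => ?_
        rw [dotProduct, Finset.mul_sum]
        exact Finset.sum_congr rfl fun x _ => by ring

lemma mulVec_sum' {m : ℕ} (M : Matrix (Fin m) (Fin m) ℂ) {ι : Type*} [Fintype ι]
    (w : ι → Fin m → ℂ) : M *ᵥ (∑ j, w j) = ∑ j, M *ᵥ w j := by
  rw [← M.mulVecLin_apply, map_sum]
  simp [mulVecLin_apply]

section rayleigh
variable {m : ℕ}

lemma rayleigh_core (M : Matrix (Fin m) (Fin m) ℂ) (e : Fin m → (Fin m → ℂ))
    (horth : ∀ i j, star (e i) ⬝ᵥ e j = if i = j then 1 else 0)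
    (lam : Fin m → ℝ) (heig : ∀ i, M *ᵥ e i = (lam i : ℂ) • e i)
    (s : Finset (Fin m)) (x : Fin m → ℂ)
    (hx : x ∈ Submodule.span ℂ (e '' ↑s)) :
    ∃ g : ↥s → ℝ, (∀ i : ↥s, 0 ≤ g i) ∧
      (star x ⬝ᵥ x).re = ∑ i : ↥s, g i ∧
      (star x ⬝ᵥ (M *ᵥ x)).re = ∑ i : ↥s, lam i.val * g i := by
  classical
  have himg : e '' ↑s = Set.range (fun i : ↥s => e ↑i) := Set.image_eq_range _ _
  rw [himg, Submodule.mem_span_range_iff_exists_fun] at hx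
  obtain ⟨c, hc⟩ := hx
  refine ⟨fun i => Complex.normSq (c i), fun i => Complex.normSq_nonneg _, ?_, ?_⟩
  · have h1 : star x ⬝ᵥ x = ∑ i : ↥s, ((Complex.normSq (c i) : ℝ) : ℂ) := by
      rw [← hc, dot_sum_sum]
      refine Finset.sum_congr rfl fun i _ => ?_
      rw [Finset.sum_eq_single i]
      · rw [horth, if_pos rfl, mul_one, ← Complex.normSq_eq_conj_mul_self]
      · intro j _ hji
        rw [horth, if_neg (fun h => hji (Subtype.ext h).symm), mul_zero]
      · intro h; exact absurd (Finset.mem_univ i) h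
    rw [h1, ← Complex.ofReal_sum, Complex.ofReal_re]
  · have hMx : M *ᵥ x = ∑ i : ↥s, ((lam i.val : ℂ) * c i) • e ↑i := by
      rw [← hc]
      rw [mulVec_sum']
      refine Finset.sum_congr rfl fun i _ => ?_
      rw [mulVec_smul, heig, smul_smul, mul_comm]
    have h2 : star x ⬝ᵥ (M *ᵥ x)
        = ∑ i : ↥s, ((lam i.val * Complex.normSq (c i) : ℝ) : ℂ) := by
      rw [hMx, ← hc, dot_sum_sum]
      refine Finset.sum_congr rfl fun i _ => ?_
      rw [Finset.sum_eq_single i]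
      · rw [horth, if_pos rfl, mul_one]
        push_cast
        rw [mul_left_comm, ← Complex.normSq_eq_conj_mul_self]
      · intro j _ hji
        rw [horth, if_neg (fun h => hji (Subtype.ext h).symm), mul_zero]
      · intro h; exact absurd (Finset.mem_univ i) h
    rw [h2, ← Complex.ofReal_sum, Complex.ofReal_re]

lemma rayleigh_le_s10 (M : Matrix (Fin m) (Fin m) ℂ) (e : Fin m → (Fin m → ℂ))
    (horth : ∀ i j, star (e i) ⬝ᵥ e j = if i = j then 1 else 0)
    (lam : Fin m → ℝ) (heig : ∀ i, M *ᵥ e i = (lam i : ℂ) • e i)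
    (s : Finset (Fin m)) (x : Fin m → ℂ)
    (hx : x ∈ Submodule.span ℂ (e '' ↑s)) (a : ℝ) (ha : ∀ i ∈ s, lam i ≤ a) :
    (star x ⬝ᵥ (M *ᵥ x)).re ≤ a * (star x ⬝ᵥ x).re := by
  obtain ⟨g, hg0, hxx, hMxx⟩ := rayleigh_core M e horth lam heig s x hx
  rw [hxx, hMxx, Finset.mul_sum]
  exact Finset.sum_le_sum fun i _ =>
    mul_le_mul_of_nonneg_right (ha _ i.2) (hg0 i)

lemma rayleigh_ge_s10 (M : Matrix (Fin m) (Fin m) ℂ) (e : Fin m → (Fin m → ℂ))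
    (horth : ∀ i j, star (e i) ⬝ᵥ e j = if i = j then 1 else 0)
    (lam : Fin m → ℝ) (heig : ∀ i, M *ᵥ e i = (lam i : ℂ) • e i)
    (s : Finset (Fin m)) (x : Fin m → ℂ)
    (hx : x ∈ Submodule.span ℂ (e '' ↑s)) (b : ℝ) (hb : ∀ i ∈ s, b ≤ lam i) :
    b * (star x ⬝ᵥ x).re ≤ (star x ⬝ᵥ (M *ᵥ x)).re := by
  obtain ⟨g, hg0, hxx, hMxx⟩ := rayleigh_core M e horth lam heig s x hx
  rw [hxx, hMxx, Finset.mul_sum]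
  exact Finset.sum_le_sum fun i _ =>
    mul_le_mul_of_nonneg_right (hb _ i.2) (hg0 i)

lemma finrank_span_orth (e : Fin m → (Fin m → ℂ))
    (horth : ∀ i j, star (e i) ⬝ᵥ e j = if i = j then 1 else 0)
    (s : Finset (Fin m)) :
    Module.finrank ℂ (Submodule.span ℂ (e '' ↑s)) = s.card := by
  classical
  have hli : LinearIndependent ℂ (fun i : ↥s => e ↑i) := by
    rw [Fintype.linearIndependent_iff]
    intro c hc i
    have h := congrArg (fun y => star (e ↑i) ⬝ᵥ y) hc
    simp only [dotProduct_zero] at h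
    rw [dot_sum_right] at h
    rw [Finset.sum_eq_single i] at h
    · rwa [horth, if_pos rfl, mul_one] at h
    · intro j _ hji
      rw [horth, if_neg (fun h' => hji (Subtype.ext h').symm), mul_zero]
    · intro h'; exact absurd (Finset.mem_univ i) h'
  have himg : e '' ↑s = Set.range (fun i : ↥s => e ↑i) := Set.image_eq_range _ _
  rw [himg, finrank_span_eq_card hli, Fintype.card_coe]

end rayleigh

section dim
variable {m : ℕ}

lemma exists_ne_zero_mem_inf (S W : Submodule ℂ (Fin m → ℂ))
    (h : m < Module.finrank ℂ S + Module.finrank ℂ W) :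
    ∃ x : Fin m → ℂ, x ≠ 0 ∧ x ∈ S ∧ x ∈ W := by
  have h1 := Submodule.finrank_sup_add_finrank_inf_eq S W
  have h2 : Module.finrank ℂ ↥(S ⊔ W) ≤ m := by
    have := Submodule.finrank_le (S ⊔ W)
    rwa [Module.finrank_fin_fun] at this
  have h3 : 0 < Module.finrank ℂ ↥(S ⊓ W) := by omega
  have h4 : S ⊓ W ≠ ⊥ := by
    intro hbot
    rw [hbot, finrank_bot] at h3
    exact lt_irrefl 0 h3
  obtain ⟨x, hx, hx0⟩ := Submodule.exists_mem_ne_zero_of_ne_bot h4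
  exact ⟨x, hx0, hx.1, hx.2⟩

lemma herm_orth {M : Matrix (Fin m) (Fin m) ℂ} (hM : M.IsHermitian) :
    ∀ i j, star ⇑(hM.eigenvectorBasis i) ⬝ᵥ ⇑(hM.eigenvectorBasis j)
      = if i = j then 1 else 0 := by
  intro i j
  have h := hM.eigenvectorBasis.orthonormal
  rw [orthonormal_iff_ite] at h
  have h2 := h i j
  rw [EuclideanSpace.inner_eq_star_dotProduct] at h2
  rw [dotProduct_comm]
  simpa using h2

lemma herm_eig {M : Matrix (Fin m) (Fin m) ℂ} (hM : M.IsHermitian) :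
    ∀ i, M *ᵥ ⇑(hM.eigenvectorBasis i)
      = ((hM.eigenvalues i : ℝ) : ℂ) • ⇑(hM.eigenvectorBasis i) := by
  intro i
  rw [hM.mulVec_eigenvectorBasis i]
  funext j
  simp [Complex.real_smul]

end dim

section master
variable {n r : ℕ}

lemma master_le (A : Matrix (Fin n) (Fin n) ℂ) (B : Matrix (Fin r) (Fin r) ℂ)
    (eA : Fin n → Fin n → ℂ)
    (horthA : ∀ i j, star (eA i) ⬝ᵥ eA j = if i = j then 1 else 0)
    (lamA : Fin n → ℝ) (heigA : ∀ i, A *ᵥ eA i = (lamA i : ℂ) • eA i)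
    (eB : Fin r → Fin r → ℂ)
    (horthB : ∀ i j, star (eB i) ⬝ᵥ eB j = if i = j then 1 else 0)
    (lamB : Fin r → ℝ) (heigB : ∀ i, B *ᵥ eB i = (lamB i : ℂ) • eB i)
    (U : Matrix (Fin n) (Fin r) ℂ)
    (hUU : ∀ y z, star (U *ᵥ y) ⬝ᵥ (U *ᵥ z) = star y ⬝ᵥ z)
    (hUAU : ∀ y z, star (U *ᵥ y) ⬝ᵥ (A *ᵥ (U *ᵥ z)) = star y ⬝ᵥ (B *ᵥ z))
    (sA : Finset (Fin n)) (sB : Finset (Fin r)) (hcard : n < sA.card + sB.card)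
    (a b : ℝ) (ha : ∀ i ∈ sA, lamA i ≤ a) (hb : ∀ j ∈ sB, b ≤ lamB j) :
    b ≤ a := by
  classical
  have hUinj : Function.Injective U.mulVecLin := by
    rw [← LinearMap.ker_eq_bot]
    rw [LinearMap.ker_eq_bot']
    intro y hy
    by_contra hy0
    have h1 : star y ⬝ᵥ y = 0 := by
      rw [← hUU y y]
      rw [show U *ᵥ y = 0 from hy]
      simp
    have := dot_self_re_pos hy0
    rw [h1] at this
    simp at this
  set SA := Submodule.span ℂ (eA '' ↑sA) with hSA
  set SB := Submodule.span ℂ (eB '' ↑sB) with hSB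
  have hrA : Module.finrank ℂ SA = sA.card := finrank_span_orth eA horthA sA
  have hrB : Module.finrank ℂ (SB.map U.mulVecLin) = sB.card := by
    rw [← (Submodule.equivMapOfInjective U.mulVecLin hUinj SB).finrank_eq]
    exact finrank_span_orth eB horthB sB
  obtain ⟨x, hx0, hxA, hxB⟩ := exists_ne_zero_mem_inf SA (SB.map U.mulVecLin)
    (by rw [hrA, hrB]; exact hcard)
  obtain ⟨y, hy, hyx⟩ := hxB
  rw [Matrix.mulVecLin_apply] at hyx
  have hρ : 0 < (star x ⬝ᵥ x).re := dot_self_re_pos hx0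
  have hyy : star y ⬝ᵥ y = star x ⬝ᵥ x := by rw [← hyx, hUU]
  have hstep1 : b * (star x ⬝ᵥ x).re ≤ (star x ⬝ᵥ (A *ᵥ x)).re := by
    have h := rayleigh_ge_s10 B eB horthB lamB heigB sB y hy b hb
    rw [hyy] at h
    have heq : star y ⬝ᵥ (B *ᵥ y) = star x ⬝ᵥ (A *ᵥ x) := by
      rw [← hUAU y y, hyx]
    rwa [heq] at h
  have hstep2 : (star x ⬝ᵥ (A *ᵥ x)).re ≤ a * (star x ⬝ᵥ x).re :=
    rayleigh_le_s10 A eA horthA lamA heigA sA x hxA a ha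
  have := hstep1.trans hstep2
  exact le_of_mul_le_mul_right (by linarith [this]) hρ

lemma master_ge (A : Matrix (Fin n) (Fin n) ℂ) (B : Matrix (Fin r) (Fin r) ℂ)
    (eA : Fin n → Fin n → ℂ)
    (horthA : ∀ i j, star (eA i) ⬝ᵥ eA j = if i = j then 1 else 0)
    (lamA : Fin n → ℝ) (heigA : ∀ i, A *ᵥ eA i = (lamA i : ℂ) • eA i)
    (eB : Fin r → Fin r → ℂ)
    (horthB : ∀ i j, star (eB i) ⬝ᵥ eB j = if i = j then 1 else 0)
    (lamB : Fin r → ℝ) (heigB : ∀ i, B *ᵥ eB i = (lamB i : ℂ) • eB i)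
    (U : Matrix (Fin n) (Fin r) ℂ)
    (hUU : ∀ y z, star (U *ᵥ y) ⬝ᵥ (U *ᵥ z) = star y ⬝ᵥ z)
    (hUAU : ∀ y z, star (U *ᵥ y) ⬝ᵥ (A *ᵥ (U *ᵥ z)) = star y ⬝ᵥ (B *ᵥ z))
    (sA : Finset (Fin n)) (sB : Finset (Fin r)) (hcard : n < sA.card + sB.card)
    (a b : ℝ) (ha : ∀ j ∈ sB, lamB j ≤ a) (hb : ∀ i ∈ sA, b ≤ lamA i) :
    b ≤ a := by
  classical
  have hUinj : Function.Injective U.mulVecLin := by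
    rw [← LinearMap.ker_eq_bot]
    rw [LinearMap.ker_eq_bot']
    intro y hy
    by_contra hy0
    have h1 : star y ⬝ᵥ y = 0 := by
      rw [← hUU y y]
      rw [show U *ᵥ y = 0 from hy]
      simp
    have := dot_self_re_pos hy0
    rw [h1] at this
    simp at this
  set SA := Submodule.span ℂ (eA '' ↑sA) with hSA
  set SB := Submodule.span ℂ (eB '' ↑sB) with hSB
  have hrA : Module.finrank ℂ SA = sA.card := finrank_span_orth eA horthA sA
  have hrB : Module.finrank ℂ (SB.map U.mulVecLin) = sB.card := by
    rw [← (Submodule.equivMapOfInjective U.mulVecLin hUinj SB).finrank_eq]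
    exact finrank_span_orth eB horthB sB
  obtain ⟨x, hx0, hxA, hxB⟩ := exists_ne_zero_mem_inf SA (SB.map U.mulVecLin)
    (by rw [hrA, hrB]; exact hcard)
  obtain ⟨y, hy, hyx⟩ := hxB
  rw [Matrix.mulVecLin_apply] at hyx
  have hρ : 0 < (star x ⬝ᵥ x).re := dot_self_re_pos hx0
  have hyy : star y ⬝ᵥ y = star x ⬝ᵥ x := by rw [← hyx, hUU]
  have hstep1 : b * (star x ⬝ᵥ x).re ≤ (star x ⬝ᵥ (A *ᵥ x)).re :=
    rayleigh_ge_s10 A eA horthA lamA heigA sA x hxA b hb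
  have hstep2 : (star x ⬝ᵥ (A *ᵥ x)).re ≤ a * (star x ⬝ᵥ x).re := by
    have h := rayleigh_le_s10 B eB horthB lamB heigB sB y hy a ha
    rw [hyy] at h
    have heq : star y ⬝ᵥ (B *ᵥ y) = star x ⬝ᵥ (A *ᵥ x) := by
      rw [← hUAU y y, hyx]
    rwa [heq] at h
  have := hstep1.trans hstep2
  exact le_of_mul_le_mul_right (by linarith [this]) hρ

end master

/-- Inclusion principle (Cauchy interlacing for compressions): if `A` is
Hermitian with decreasing eigenvalues `α`, `u₁,…,u_r` is an orthonormal basis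
of an `r`-dimensional subspace `L`, and `B` is the matrix of the compression
`A_L` (i.e. `B p q = ⟨A u_q, u_p⟩`) with decreasing eigenvalues `β`, then
`α_{n-r+k} ≤ β_k ≤ α_k` for `1 ≤ k ≤ r` (0-based indices here). -/
theorem inclusion_principle {n r : ℕ} (hr : r ≤ n)
    (A : Matrix (Fin n) (Fin n) ℂ) (hA : A.IsHermitian)
    (α : Fin n → ℝ) (hα : IsEigSeq A hA α)
    (u : Fin r → (Fin n → ℂ))
    (hu : ∀ p q, star (u p) ⬝ᵥ u q = if p = q then 1 else 0)
    (B : Matrix (Fin r) (Fin r) ℂ)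
    (hBdef : ∀ p q, B p q = star (u p) ⬝ᵥ A.mulVec (u q))
    (hB : B.IsHermitian)
    (β : Fin r → ℝ) (hβ : IsEigSeq B hB β) :
    ∀ k : Fin r,
      α ⟨n - r + k.val, by have := k.isLt; omega⟩ ≤ β k ∧
      β k ≤ α ⟨k.val, lt_of_lt_of_le k.isLt hr⟩ := by
  classical
  obtain ⟨hαmono, σ, hσ⟩ := hα
  obtain ⟨hβmono, τ, hτ⟩ := hβ
  set eA : Fin n → (Fin n → ℂ) := fun i => ⇑(hA.eigenvectorBasis i) with heA
  set eB : Fin r → (Fin r → ℂ) := fun j => ⇑(hB.eigenvectorBasis j) with heB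
  set Umat : Matrix (Fin n) (Fin r) ℂ := Matrix.of fun i q => u q i with hUm
  have hrep : ∀ y : Fin r → ℂ, Umat *ᵥ y = ∑ q, y q • u q := by
    intro y; funext i
    simp [Umat, mulVec, dotProduct, Finset.sum_apply, mul_comm]
  have hUU : ∀ y z, star (Umat *ᵥ y) ⬝ᵥ (Umat *ᵥ z) = star y ⬝ᵥ z := by
    intro y z
    rw [hrep, hrep, dot_sum_sum]
    rw [dotProduct]
    refine Finset.sum_congr rfl fun p _ => ?_
    rw [Finset.sum_eq_single p]
    · rw [hu, if_pos rfl, mul_one]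
      simp only [Pi.star_apply, Complex.star_def]
    · intro q _ hq
      rw [hu, if_neg (fun h => hq h.symm), mul_zero]
    · intro h; exact absurd (Finset.mem_univ p) h
  have hUAU : ∀ y z, star (Umat *ᵥ y) ⬝ᵥ (A *ᵥ (Umat *ᵥ z)) = star y ⬝ᵥ (B *ᵥ z) := by
    intro y z
    rw [hrep, hrep, mulVec_sum']
    have hsm : ∀ q, A *ᵥ (z q • u q) = z q • (A *ᵥ u q) := fun q => mulVec_smul A (z q) (u q)
    simp only [hsm]
    rw [dot_sum_sum]
    simp only [← hBdef]
    rw [eq_comm]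
    simp only [mulVec, dotProduct, Pi.star_apply, Finset.mul_sum]
    refine Finset.sum_congr rfl fun p _ => Finset.sum_congr rfl fun q _ => ?_
    simp only [Pi.star_apply, Complex.star_def]
    ring
  intro k
  have hkr : (k : ℕ) < r := k.isLt
  have hkn : (k : ℕ) < n := lt_of_lt_of_le hkr hr
  constructor
  · -- lower bound : α (n-r+k) ≤ β k
    set i0 : Fin n := ⟨n - r + k.val, by omega⟩ with hi0
    refine master_ge A B eA (herm_orth hA) hA.eigenvalues (herm_eig hA)
      eB (herm_orth hB) hB.eigenvalues (herm_eig hB) Umat hUU hUAU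
      ((Finset.Iic i0).image σ) ((Finset.Ici k).image τ) ?_ (β k) (α i0) ?_ ?_
    · rw [Finset.card_image_of_injective _ σ.injective,
        Finset.card_image_of_injective _ τ.injective, Fin.card_Iic, Fin.card_Ici]
      simp only [hi0]
      omega
    · intro j hj
      obtain ⟨j', hj', rfl⟩ := Finset.mem_image.mp hj
      rw [← hτ j']
      exact hβmono (Finset.mem_Ici.mp hj')
    · intro i hi
      obtain ⟨i', hi', rfl⟩ := Finset.mem_image.mp hi
      rw [← hσ i']
      exact hαmono (Finset.mem_Iic.mp hi')
  · -- upper bound : β k ≤ α k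
    set i1 : Fin n := ⟨k.val, hkn⟩ with hi1
    refine master_le A B eA (herm_orth hA) hA.eigenvalues (herm_eig hA)
      eB (herm_orth hB) hB.eigenvalues (herm_eig hB) Umat hUU hUAU
      ((Finset.Ici i1).image σ) ((Finset.Iic k).image τ) ?_ (α i1) (β k) ?_ ?_
    · rw [Finset.card_image_of_injective _ σ.injective,
        Finset.card_image_of_injective _ τ.injective, Fin.card_Iic, Fin.card_Ici]
      simp only [hi1]
      omega
    · intro i hi
      obtain ⟨i', hi', rfl⟩ := Finset.mem_image.mp hi
      rw [← hσ i']
      exact hαmono (Finset.mem_Ici.mp hi')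
    · intro j hj
      obtain ⟨j', hj', rfl⟩ := Finset.mem_image.mp hj
      rw [← hτ j']
      exact hβmono (Finset.mem_Iic.mp hj')
end

section
/- There exist 3×3 complex matrices A, B with singular values (1,1,0) and (1,1,0) respectively such that C = A + B has singular values (1,1,1), but no such real 3×3 matrices A, B exist. -/
open Matrix BigOperators

namespace SingularAux

variable {𝕜 : Type*} [RCLike 𝕜] {n : Type*} [Fintype n] [DecidableEq n]

lemma cancelUsU {N : Matrix n n 𝕜} (h : N.IsHermitian) (X : Matrix n n 𝕜) :
    (h.eigenvectorUnitary : Matrix n n 𝕜) * (star (h.eigenvectorUnitary : Matrix n n 𝕜) * X)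
      = X := by
  rw [← mul_assoc, Matrix.mem_unitaryGroup_iff.mp h.eigenvectorUnitary.2, one_mul]

lemma cancelsUU {N : Matrix n n 𝕜} (h : N.IsHermitian) (X : Matrix n n 𝕜) :
    star (h.eigenvectorUnitary : Matrix n n 𝕜) * ((h.eigenvectorUnitary : Matrix n n 𝕜) * X)
      = X := by
  rw [← mul_assoc, Matrix.mem_unitaryGroup_iff'.mp h.eigenvectorUnitary.2, one_mul]

lemma trace_eq_sum_eigenvalues {N : Matrix n n 𝕜} (h : N.IsHermitian) :
    N.trace = ((∑ i, h.eigenvalues i : ℝ) : 𝕜) := by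
  conv_lhs => rw [h.spectral_theorem, Unitary.conjStarAlgAut_apply]
  rw [Matrix.trace_mul_comm, ← mul_assoc,
    Matrix.mem_unitaryGroup_iff'.mp h.eigenvectorUnitary.2, one_mul, Matrix.trace_diagonal,
    RCLike.ofReal_sum]
  simp

lemma eig_zero_or_one {N : Matrix n n 𝕜} (h : N.IsHermitian) (hN : N * N = N) (i : n) :
    h.eigenvalues i = 0 ∨ h.eigenvalues i = 1 := by
  have e1 : (star (h.eigenvectorUnitary : Matrix n n 𝕜) * N * h.eigenvectorUnitary)
        * (star (h.eigenvectorUnitary : Matrix n n 𝕜) * N * h.eigenvectorUnitary)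
      = star (h.eigenvectorUnitary : Matrix n n 𝕜) * (N * N) * h.eigenvectorUnitary := by
    simp only [mul_assoc, cancelUsU h]
  rw [hN, ← Unitary.conjStarAlgAut_star_apply (S := 𝕜), h.conjStarAlgAut_star_eigenvectorUnitary] at e1
  have hDD := e1
  rw [Matrix.diagonal_mul_diagonal] at hDD
  have h2 := congrFun (congrFun hDD i) i
  simp only [Matrix.diagonal_apply_eq, Pi.mul_apply, Function.comp_apply,
    ← RCLike.ofReal_mul] at h2
  have h3 : h.eigenvalues i * h.eigenvalues i = h.eigenvalues i := RCLike.ofReal_inj.mp h2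
  have h4 : h.eigenvalues i * (h.eigenvalues i - 1) = 0 := by linear_combination h3
  rcases mul_eq_zero.mp h4 with h5 | h5
  · exact Or.inl h5
  · exact Or.inr (by linarith)

lemma idem_of_eigs {N : Matrix n n 𝕜} (h : N.IsHermitian)
    (he : ∀ i, h.eigenvalues i = 0 ∨ h.eigenvalues i = 1) : N * N = N := by
  have hDD : diagonal (RCLike.ofReal ∘ h.eigenvalues : n → 𝕜)
        * diagonal (RCLike.ofReal ∘ h.eigenvalues : n → 𝕜)
      = diagonal (RCLike.ofReal ∘ h.eigenvalues : n → 𝕜) := by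
    have hfun : (fun i => (RCLike.ofReal ∘ h.eigenvalues : n → 𝕜) i
          * (RCLike.ofReal ∘ h.eigenvalues : n → 𝕜) i)
        = (RCLike.ofReal ∘ h.eigenvalues : n → 𝕜) := by
      funext i
      rcases he i with hh | hh <;> simp [hh]
    rw [Matrix.diagonal_mul_diagonal, hfun]
  calc N * N
      = ((h.eigenvectorUnitary : Matrix n n 𝕜)
          * diagonal (RCLike.ofReal ∘ h.eigenvalues) * star (h.eigenvectorUnitary : Matrix n n 𝕜))
        * ((h.eigenvectorUnitary : Matrix n n 𝕜)
          * diagonal (RCLike.ofReal ∘ h.eigenvalues)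
          * star (h.eigenvectorUnitary : Matrix n n 𝕜)) := by
        rw [← Unitary.conjStarAlgAut_apply (S := 𝕜), ← h.spectral_theorem]
    _ = (h.eigenvectorUnitary : Matrix n n 𝕜)
          * (diagonal (RCLike.ofReal ∘ h.eigenvalues) * diagonal (RCLike.ofReal ∘ h.eigenvalues))
          * star (h.eigenvectorUnitary : Matrix n n 𝕜) := by
        simp only [mul_assoc, cancelsUU h]
    _ = N := by rw [hDD, ← Unitary.conjStarAlgAut_apply (S := 𝕜), ← h.spectral_theorem]

lemma eq_one_of_eigs {N : Matrix n n 𝕜} (h : N.IsHermitian)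
    (he : ∀ i, h.eigenvalues i = 1) : N = 1 := by
  have hf : diagonal (RCLike.ofReal ∘ h.eigenvalues : n → 𝕜) = 1 := by
    rw [show (RCLike.ofReal ∘ h.eigenvalues : n → 𝕜) = fun _ => 1 from funext fun i => by
      simp [he i]]
    exact Matrix.diagonal_one
  calc N = (h.eigenvectorUnitary : Matrix n n 𝕜)
        * diagonal (RCLike.ofReal ∘ h.eigenvalues)
        * star (h.eigenvectorUnitary : Matrix n n 𝕜) := h.spectral_theorem
    _ = 1 := by
        rw [hf, mul_one, Matrix.mem_unitaryGroup_iff.mp h.eigenvectorUnitary.2]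

/-- partial isometry fact over ℝ -/
lemma piso {X : Matrix (Fin 3) (Fin 3) ℝ}
    (hP : (Xᴴ * X) * (Xᴴ * X) = Xᴴ * X) : X * (Xᴴ * X) = X := by
  have expand : (X * (Xᴴ * X) - X)ᴴ * (X * (Xᴴ * X) - X)
      = ((Xᴴ * X) * (Xᴴ * X)) * (Xᴴ * X) - (Xᴴ * X) * (Xᴴ * X)
        - (Xᴴ * X) * (Xᴴ * X) + (Xᴴ * X) := by
    simp only [Matrix.conjTranspose_sub, Matrix.conjTranspose_mul,
      Matrix.conjTranspose_conjTranspose]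
    noncomm_ring
  rw [hP, hP] at expand
  have h0 : (X * (Xᴴ * X) - X)ᴴ * (X * (Xᴴ * X) - X) = 0 := by
    rw [expand]; abel
  exact sub_eq_zero.mp (Matrix.conjTranspose_mul_self_eq_zero.mp h0)

lemma perm110 (f : Fin 3 → ℝ) (h01 : ∀ i, f i = 0 ∨ f i = 1) (hsum : ∑ i, f i = 2) :
    ∃ σ : Equiv.Perm (Fin 3), ∀ i, f (σ i) = ((![1, 1, 0] : Fin 3 → ℝ) i) ^ 2 := by
  rw [Fin.sum_univ_three] at hsum
  rcases h01 0 with h0 | h0 <;> rcases h01 1 with h1 | h1 <;> rcases h01 2 with h2 | h2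
  · exfalso; rw [h0, h1, h2] at hsum; norm_num at hsum
  · exfalso; rw [h0, h1, h2] at hsum; norm_num at hsum
  · exfalso; rw [h0, h1, h2] at hsum; norm_num at hsum
  · refine ⟨Equiv.swap 0 2, fun i => ?_⟩
    fin_cases i <;> simp [Equiv.swap_apply_def, h0, h1, h2]
  · exfalso; rw [h0, h1, h2] at hsum; norm_num at hsum
  · refine ⟨Equiv.swap 1 2, fun i => ?_⟩
    fin_cases i <;> simp [Equiv.swap_apply_def, h0, h1, h2]
  · refine ⟨1, fun i => ?_⟩
    fin_cases i <;> simp [h0, h1, h2]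
  · exfalso; rw [h0, h1, h2] at hsum; norm_num at hsum

lemma all_one (f : Fin 3 → ℝ) (h01 : ∀ i, f i = 0 ∨ f i = 1) (hsum : ∑ i, f i = 3) :
    ∀ i, f i = 1 := by
  rw [Fin.sum_univ_three] at hsum
  intro i
  rcases h01 0 with h0 | h0 <;> rcases h01 1 with h1 | h1 <;> rcases h01 2 with h2 | h2 <;>
    [skip; skip; skip; skip; skip; skip; skip; (fin_cases i <;> assumption)] <;>
    (exfalso; rw [h0, h1, h2] at hsum; norm_num at hsum)

lemma det_one_sub_fin3 (M : Matrix (Fin 3) (Fin 3) ℝ) :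
    (1 - M).det = 1 - M.trace + ((M.trace) ^ 2 - (M * M).trace) / 2 - M.det := by
  simp [Matrix.det_fin_three, Matrix.trace_fin_three, Matrix.mul_apply,
    Fin.sum_univ_three, Matrix.sub_apply, Matrix.one_apply]
  ring

end SingularAux

/-- `s` lists the singular values (with multiplicity, in some order) of the
complex matrix `M`: the eigenvalues of `Mᴴ * M` are the squares `s i ^ 2`. -/
def HasSingularValuesC (M : Matrix (Fin 3) (Fin 3) ℂ) (s : Fin 3 → ℝ) : Prop :=
  ∃ (h : (Mᴴ * M).IsHermitian) (σ : Equiv.Perm (Fin 3)),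
    ∀ i, h.eigenvalues (σ i) = (s i) ^ 2

/-- `s` lists the singular values (with multiplicity, in some order) of the
real matrix `M`: the eigenvalues of `Mᴴ * M = Mᵀ * M` are the squares. -/
def HasSingularValuesR (M : Matrix (Fin 3) (Fin 3) ℝ) (s : Fin 3 → ℝ) : Prop :=
  ∃ (h : (Mᴴ * M).IsHermitian) (σ : Equiv.Perm (Fin 3)),
    ∀ i, h.eigenvalues (σ i) = (s i) ^ 2

namespace SingularAux

lemma hsvC_of_idem2 {M : Matrix (Fin 3) (Fin 3) ℂ}
    (hid : (Mᴴ * M) * (Mᴴ * M) = Mᴴ * M) (ht2 : (Mᴴ * M).trace = 2) :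
    HasSingularValuesC M ![1, 1, 0] := by
  have h : (Mᴴ * M).IsHermitian := Matrix.isHermitian_conjTranspose_mul_self M
  have h01 := fun i => eig_zero_or_one h hid i
  have hsum : ∑ i, h.eigenvalues i = 2 := by
    have ht := trace_eq_sum_eigenvalues h
    have : ((∑ i, h.eigenvalues i : ℝ) : ℂ) = 2 := ht.symm.trans ht2
    exact_mod_cast this
  obtain ⟨σ, hσ⟩ := perm110 _ h01 hsum
  exact ⟨h, σ, hσ⟩

lemma hsvC_of_one {M : Matrix (Fin 3) (Fin 3) ℂ}
    (hM : Mᴴ * M = 1) : HasSingularValuesC M ![1, 1, 1] := by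
  have h : (Mᴴ * M).IsHermitian := Matrix.isHermitian_conjTranspose_mul_self M
  have hid : (Mᴴ * M) * (Mᴴ * M) = Mᴴ * M := by rw [hM, one_mul]
  have h01 := fun i => eig_zero_or_one h hid i
  have hsum : ∑ i, h.eigenvalues i = 3 := by
    have ht := trace_eq_sum_eigenvalues h
    have ht2 : (Mᴴ * M).trace = 3 := by
      rw [hM, Matrix.trace_one]
      norm_num
    have : ((∑ i, h.eigenvalues i : ℝ) : ℂ) = 3 := ht.symm.trans ht2
    exact_mod_cast this
  have hone := all_one _ h01 hsum
  refine ⟨h, 1, fun i => ?_⟩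
  rw [show ((1 : Equiv.Perm (Fin 3)) i) = i from rfl, hone i]
  fin_cases i <;> norm_num

lemma extract110 {M : Matrix (Fin 3) (Fin 3) ℝ} (hs : HasSingularValuesR M ![1, 1, 0]) :
    (Mᴴ * M) * (Mᴴ * M) = Mᴴ * M ∧ (Mᴴ * M).trace = 2 ∧ M.det = 0 := by
  obtain ⟨h, σ, he⟩ := hs
  have h01 : ∀ j, h.eigenvalues j = 0 ∨ h.eigenvalues j = 1 := by
    intro j
    have hj := he (σ.symm j)
    rw [Equiv.apply_symm_apply] at hj
    rw [hj]
    generalize σ.symm j = k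
    fin_cases k <;> norm_num
  have hidem := idem_of_eigs h h01
  have hsum : ∑ j, h.eigenvalues j = 2 := by
    rw [← Equiv.sum_comp σ h.eigenvalues]
    calc ∑ i, h.eigenvalues (σ i)
        = ∑ i : Fin 3, ((![1, 1, 0] : Fin 3 → ℝ) i) ^ 2 :=
          Finset.sum_congr rfl fun i _ => he i
      _ = 2 := by rw [Fin.sum_univ_three]; norm_num [show (![1, 1, 0] : Fin 3 → ℝ) 2 = 0 from rfl]
  have hprod : ∏ j, h.eigenvalues j = 0 := by
    rw [← Equiv.prod_comp σ h.eigenvalues]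
    calc ∏ i, h.eigenvalues (σ i)
        = ∏ i : Fin 3, ((![1, 1, 0] : Fin 3 → ℝ) i) ^ 2 :=
          Finset.prod_congr rfl fun i _ => he i
      _ = 0 := by rw [Fin.prod_univ_three]; norm_num [show (![1, 1, 0] : Fin 3 → ℝ) 2 = 0 from rfl]
  refine ⟨hidem, ?_, ?_⟩
  · have ht := trace_eq_sum_eigenvalues h
    rw [hsum] at ht
    rw [ht]
    norm_num
  · have hd := h.det_eq_prod_eigenvalues
    have hdet0 : (Mᴴ * M).det = 0 := by
      rw [hd]
      exact_mod_cast hprod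
    rw [Matrix.det_mul, Matrix.det_conjTranspose, star_trivial] at hdet0
    exact mul_self_eq_zero.mp hdet0

lemma extract111 {M : Matrix (Fin 3) (Fin 3) ℝ} (hs : HasSingularValuesR M ![1, 1, 1]) :
    Mᴴ * M = 1 := by
  obtain ⟨h, σ, he⟩ := hs
  apply eq_one_of_eigs h
  intro j
  have hj := he (σ.symm j)
  rw [Equiv.apply_symm_apply] at hj
  rw [hj]
  generalize σ.symm j = k
  fin_cases k <;> norm_num

end SingularAux

open SingularAux in
/-- There exist `3×3` complex matrices `A`, `B` with singular values `(1,1,0)`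
and `(1,1,0)` such that `A + B` has singular values `(1,1,1)`, but no such
real `3×3` matrices exist. -/
theorem complex_but_not_real_singular_values :
    (∃ A B : Matrix (Fin 3) (Fin 3) ℂ,
      HasSingularValuesC A ![1, 1, 0] ∧ HasSingularValuesC B ![1, 1, 0] ∧
        HasSingularValuesC (A + B) ![1, 1, 1]) ∧
    ¬ (∃ A B : Matrix (Fin 3) (Fin 3) ℝ,
      HasSingularValuesR A ![1, 1, 0] ∧ HasSingularValuesR B ![1, 1, 0] ∧
        HasSingularValuesR (A + B) ![1, 1, 1]) := by
  constructor
  · -- complex existence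
    set ζ : ℂ := ⟨1/2, Real.sqrt 3 / 2⟩ with hζdef
    have h3 : Real.sqrt 3 * Real.sqrt 3 = 3 := Real.mul_self_sqrt (by norm_num)
    have hz : (starRingEnd ℂ) ζ * ζ = 1 := by
      apply Complex.ext <;>
        simp [hζdef, Complex.mul_re, Complex.mul_im] <;> nlinarith [h3]
    have hz' : (starRingEnd ℂ) ((starRingEnd ℂ) ζ) * (starRingEnd ℂ) ζ = 1 := by
      rw [Complex.conj_conj, mul_comm]; exact hz
    have hz2 : ζ * (starRingEnd ℂ) ζ = 1 := by rw [mul_comm]; exact hz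
    have hzz : ζ + (starRingEnd ℂ) ζ = 1 := by
      apply Complex.ext <;> simp [hζdef] <;> norm_num
    refine ⟨Matrix.diagonal ![1, ζ, 0], Matrix.diagonal ![0, (starRingEnd ℂ) ζ, 1],
      ?_, ?_, ?_⟩
    · have hd1 : (Matrix.diagonal ![1, ζ, 0])ᴴ * Matrix.diagonal ![1, ζ, 0]
          = Matrix.diagonal ![1, 1, 0] := by
        rw [Matrix.diagonal_conjTranspose, Matrix.diagonal_mul_diagonal]
        apply congrArg
        funext i
        fin_cases i <;> simp [hz]
      apply hsvC_of_idem2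
      · rw [hd1, Matrix.diagonal_mul_diagonal]
        apply congrArg
        funext i
        fin_cases i <;> norm_num
      · rw [hd1, Matrix.trace_diagonal, Fin.sum_univ_three]
        norm_num [show (![1, 1, 0] : Fin 3 → ℂ) 2 = 0 from rfl]
    · have hd2 : (Matrix.diagonal ![0, (starRingEnd ℂ) ζ, 1])ᴴ
            * Matrix.diagonal ![0, (starRingEnd ℂ) ζ, 1]
          = Matrix.diagonal ![0, 1, 1] := by
        rw [Matrix.diagonal_conjTranspose, Matrix.diagonal_mul_diagonal]
        apply congrArg
        funext i
        fin_cases i <;> simp [hz', hz2]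
      apply hsvC_of_idem2
      · rw [hd2, Matrix.diagonal_mul_diagonal]
        apply congrArg
        funext i
        fin_cases i <;> norm_num
      · rw [hd2, Matrix.trace_diagonal, Fin.sum_univ_three]
        norm_num [show (![0, 1, 1] : Fin 3 → ℂ) 2 = 1 from rfl]
    · apply hsvC_of_one
      have hAB : Matrix.diagonal ![1, ζ, 0] + Matrix.diagonal ![0, (starRingEnd ℂ) ζ, 1]
          = Matrix.diagonal ![1, 1, 1] := by
        rw [Matrix.diagonal_add]
        apply congrArg
        funext i
        fin_cases i <;> simp [hzz]
      have h111 : Matrix.diagonal (![1, 1, 1] : Fin 3 → ℂ) = 1 := by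
        rw [show (![1, 1, 1] : Fin 3 → ℂ) = fun _ => 1 from funext fun i => by
          fin_cases i <;> simp]
        exact Matrix.diagonal_one
      rw [hAB, h111]
      simp
  · -- real impossibility
    rintro ⟨A, B, hA, hB, hC⟩
    obtain ⟨hPidem, hPtr, hdetA⟩ := extract110 hA
    obtain ⟨hQidem, hQtr, hdetB⟩ := extract110 hB
    have hCC : (A + B)ᴴ * (A + B) = 1 := extract111 hC
    have hCC' : (A + B) * (A + B)ᴴ = 1 := mul_eq_one_comm.mp hCC
    set C : Matrix (Fin 3) (Fin 3) ℝ := A + B with hCdef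
    set D : Matrix (Fin 3) (Fin 3) ℝ := Cᴴ * B with hDdef
    have hcancel : ∀ X : Matrix (Fin 3) (Fin 3) ℝ, C * (Cᴴ * X) = X := fun X => by
      rw [← mul_assoc, hCC', one_mul]
    have hDQ : Dᴴ * D = Bᴴ * B := by
      rw [hDdef]
      simp only [Matrix.conjTranspose_mul, Matrix.conjTranspose_conjTranspose, mul_assoc,
        hcancel]
    have h1D : 1 - D = Cᴴ * A := by
      have hsplit : Cᴴ * A + D = 1 := by
        rw [hDdef, ← Matrix.mul_add, ← hCdef, hCC]
      rw [← hsplit]; abel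
    have hEP : (1 - D)ᴴ * (1 - D) = Aᴴ * A := by
      rw [h1D]
      simp only [Matrix.conjTranspose_mul, Matrix.conjTranspose_conjTranspose, mul_assoc,
        hcancel]
    have hdetD : D.det = 0 := by
      rw [hDdef, Matrix.det_mul, hdetB, mul_zero]
    have hdet1D : (1 - D).det = 0 := by
      rw [h1D, Matrix.det_mul, hdetA, mul_zero]
    -- trace of D
    have htrD : D.trace = 3 / 2 := by
      have hexp : Aᴴ * A = 1 - D - Dᴴ + Dᴴ * D := by
        rw [← hEP]
        simp only [Matrix.conjTranspose_sub, Matrix.conjTranspose_one]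
        noncomm_ring
      have ht := congrArg Matrix.trace hexp
      rw [hPtr, Matrix.trace_add, Matrix.trace_sub, Matrix.trace_sub, Matrix.trace_one,
        Matrix.trace_conjTranspose, star_trivial, hDQ, hQtr] at ht
      simp only [Fintype.card_fin, Nat.cast_ofNat] at ht
      linarith
    -- partial isometry facts
    have hDiso : D * (Dᴴ * D) = D := piso (by rw [hDQ]; exact hQidem)
    have hEiso : (1 - D) * ((1 - D)ᴴ * (1 - D)) = 1 - D := piso (by rw [hEP]; exact hPidem)
    -- trace of D * P' where P' = (1-D)ᴴ(1-D)
    have htrDP : (D * ((1 - D)ᴴ * (1 - D))).trace = 1 / 2 := by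
      have hP'tr : ((1 - D)ᴴ * (1 - D)).trace = 2 := by rw [hEP]; exact hPtr
      have := congrArg Matrix.trace hEiso
      rw [Matrix.sub_mul, Matrix.one_mul, Matrix.trace_sub, Matrix.trace_sub,
        Matrix.trace_one, hP'tr, htrD] at this
      simp only [Fintype.card_fin, Nat.cast_ofNat] at this
      linarith
    -- D + Dᴴ = 1 + DᴴD - (1-D)ᴴ(1-D)
    have hsum : D + Dᴴ = 1 + Dᴴ * D - (1 - D)ᴴ * (1 - D) := by
      simp only [Matrix.conjTranspose_sub, Matrix.conjTranspose_one]
      noncomm_ring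
    have hkey : D * D + D * Dᴴ = D + D * (Dᴴ * D) - D * ((1 - D)ᴴ * (1 - D)) := by
      have e1 := congrArg (fun X => D * X) hsum
      simpa only [Matrix.mul_add, Matrix.mul_sub, Matrix.mul_one] using e1
    have htrDD : (D * D).trace = 1 / 2 := by
      have ht := congrArg Matrix.trace hkey
      rw [hDiso, Matrix.trace_add, Matrix.trace_sub, Matrix.trace_add, htrDP, htrD] at ht
      have h2 : (D * Dᴴ).trace = 2 := by
        rw [Matrix.trace_mul_comm, hDQ, hQtr]
      rw [h2] at ht
      linarith
    -- final contradiction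
    have hfin := det_one_sub_fin3 D
    rw [hdet1D, htrD, htrDD, hdetD] at hfin
    norm_num at hfin
end

section
/- (Multiplicative determinant bound) Let A be a positive semidefinite Hermitian n×n matrix with eigenvalues α₁ ≥ … ≥ αₙ ≥ 0 and orthonormal eigenbasis v₁,…,vₙ with flag F_k = span(v₁,…,v_k). Let I = {i₁ < … < i_r} and let L be an r-dimensional subspace with dim(L ∩ F_{i_p}) ≥ p for all p. Then det(⟨A u_i, u_j⟩)_{1≤i,j≤r} ≥ ∏_{p=1}^r α_{i_p} for any orthonormal basis u₁,…,u_r of L, with equality for L = span(v_{i₁},…,v_{i_r}). -/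
open Matrix BigOperators
open scoped ComplexOrder


namespace DCB

lemma dot_conj {n : ℕ} (x y : Fin n → ℂ) : star x ⬝ᵥ y = star (star y ⬝ᵥ x) := by
  simp [dotProduct, map_sum, mul_comm]

lemma dot_self_re {n : ℕ} (x : Fin n → ℂ) :
    star x ⬝ᵥ x = ((∑ j, Complex.normSq (x j) : ℝ) : ℂ) := by
  push_cast
  simp [dotProduct, mul_comm, Complex.mul_conj]

lemma dot_self_nonneg {n : ℕ} (x : Fin n → ℂ) : 0 ≤ (star x ⬝ᵥ x).re := by
  rw [dot_self_re, Complex.ofReal_re]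
  exact Finset.sum_nonneg fun j _ => Complex.normSq_nonneg _

lemma dot_self_pos {n : ℕ} {x : Fin n → ℂ} (hx : x ≠ 0) :
    0 < (star x ⬝ᵥ x).re := by
  rw [dot_self_re, Complex.ofReal_re]
  have : ∃ j, x j ≠ 0 := by
    by_contra h
    push_neg at h
    exact hx (funext h)
  obtain ⟨j, hj⟩ := this
  refine Finset.sum_pos' (fun k _ => Complex.normSq_nonneg _) ⟨j, Finset.mem_univ j, ?_⟩
  simpa [Complex.normSq_pos] using hj

lemma quad_real {r : ℕ} {C : Matrix (Fin r) (Fin r) ℂ} (hC : C.IsHermitian)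
    (z : Fin r → ℂ) : (star z ⬝ᵥ C *ᵥ z).im = 0 := by
  have h1 : star z ⬝ᵥ C *ᵥ z = star (star (C *ᵥ z) ⬝ᵥ z) := dot_conj _ _
  have h2 : star (C *ᵥ z) ⬝ᵥ z = star z ⬝ᵥ C *ᵥ z := by
    rw [Matrix.star_mulVec, ← Matrix.dotProduct_mulVec, hC.eq]
  rw [h2] at h1
  have := congrArg Complex.im h1
  simp at this
  linarith

lemma star_snoc {r : ℕ} (a : Fin r → ℂ) (c : ℂ) :
    star (Fin.snoc a c : Fin (r+1) → ℂ) = Fin.snoc (star a) (star c) := by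
  funext q
  refine Fin.lastCases ?_ (fun j => ?_) q <;> simp

lemma dot_snoc {r : ℕ} (a b : Fin r → ℂ) (c d : ℂ) :
    (Fin.snoc a c : Fin (r+1) → ℂ) ⬝ᵥ (Fin.snoc b d) = a ⬝ᵥ b + c * d := by
  simp [dotProduct, Fin.sum_univ_castSucc]

lemma quad_snoc {r : ℕ} (C : Matrix (Fin (r+1)) (Fin (r+1)) ℂ) (a : Fin r → ℂ) (c : ℂ) :
    star (Fin.snoc a c : Fin (r+1) → ℂ) ⬝ᵥ (C *ᵥ Fin.snoc a c)
      = star a ⬝ᵥ (C.submatrix Fin.castSucc Fin.castSucc *ᵥ a)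
        + (star a ⬝ᵥ (fun q => C (Fin.castSucc q) (Fin.last r))) * c
        + star c * ((fun q => C (Fin.last r) (Fin.castSucc q)) ⬝ᵥ a)
        + star c * C (Fin.last r) (Fin.last r) * c := by
  rw [star_snoc]
  simp only [dotProduct, Matrix.mulVec, Matrix.submatrix_apply, Pi.star_apply,
    Fin.sum_univ_castSucc, Fin.snoc_castSucc, Fin.snoc_last, mul_add, add_mul,
    Finset.sum_add_distrib, Finset.mul_sum, Finset.sum_mul]
  ring_nf
  congr 1
  exact Finset.sum_congr rfl fun x _ => by ring

lemma psd_det_re_nonneg {m : ℕ} {M : Matrix (Fin m) (Fin m) ℂ} (h : M.PosSemidef) :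
    0 ≤ M.det.re := by
  rw [h.1.det_eq_prod_eigenvalues, ← map_prod (algebraMap ℝ ℂ), Complex.coe_algebraMap,
    Complex.ofReal_re]
  exact Finset.prod_nonneg fun j _ => h.eigenvalues_nonneg j

lemma key {r : ℕ} : ∀ (C : Matrix (Fin r) (Fin r) ℂ), C.IsHermitian →
    ∀ (β : Fin r → ℝ), (∀ p, 0 ≤ β p) →
    (∀ p : Fin r, ∀ z : Fin r → ℂ, (∀ q, p < q → z q = 0) →
      β p * (star z ⬝ᵥ z).re ≤ (star z ⬝ᵥ C *ᵥ z).re) →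
    ∏ p, β p ≤ C.det.re := by
  induction r with
  | zero =>
    intro C _ β _ _
    simp [Matrix.det_fin_zero]
  | succ r ih =>
    intro C hC β hβ hq
    set C' := C.submatrix Fin.castSucc Fin.castSucc with hC'def
    have hC' : C'.IsHermitian := hC.submatrix _
    have key_ext : ∀ z : Fin r → ℂ,
        star (Fin.snoc z 0 : Fin (r+1) → ℂ) ⬝ᵥ (C *ᵥ Fin.snoc z 0) = star z ⬝ᵥ (C' *ᵥ z) := by
      intro z
      rw [quad_snoc]
      simp [hC'def]
    have dot_ext : ∀ z : Fin r → ℂ,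
        star (Fin.snoc z 0 : Fin (r+1) → ℂ) ⬝ᵥ (Fin.snoc z 0 : Fin (r+1) → ℂ)
          = star z ⬝ᵥ z := by
      intro z
      rw [star_snoc, dot_snoc]
      simp
    have hq' : ∀ p : Fin r, ∀ z : Fin r → ℂ, (∀ q, p < q → z q = 0) →
        β p.castSucc * (star z ⬝ᵥ z).re ≤ (star z ⬝ᵥ C' *ᵥ z).re := by
      intro p z hz
      have hsupp : ∀ q : Fin (r+1), p.castSucc < q → (Fin.snoc z 0 : Fin (r+1) → ℂ) q = 0 := by
        intro q hlt
        refine Fin.lastCases ?_ (fun j hj => ?_) q hlt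
        · intro _; simp
        · simp only [Fin.snoc_castSucc]
          exact hz j (by simpa using hj)
      have h := hq p.castSucc (Fin.snoc z 0) hsupp
      rwa [key_ext, dot_ext] at h
    have ihr : ∏ p : Fin r, β p.castSucc ≤ C'.det.re := ih C' hC' _ (fun p => hβ _) hq'
    by_cases hdet : C'.det = 0
    · -- degenerate case
      obtain ⟨x, hx0, hCx⟩ := (Matrix.exists_mulVec_eq_zero_iff).mpr hdet
      have h1 := hq (Fin.last r) (Fin.snoc x 0)
        (fun q hlt => absurd hlt (not_lt.mpr (Fin.le_last q)))
      rw [key_ext, dot_ext, hCx] at h1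
      simp only [dotProduct_zero, Complex.zero_re] at h1
      have hβlast : β (Fin.last r) = 0 :=
        le_antisymm (by nlinarith [dot_self_pos hx0]) (hβ _)
      have hCps : C.PosSemidef := by
        refine Matrix.PosSemidef.of_dotProduct_mulVec_nonneg hC fun z => ?_
        rw [Complex.le_def]
        refine ⟨?_, (quad_real hC z).symm⟩
        have h2 := hq (Fin.last r) z (fun q hlt => absurd hlt (not_lt.mpr (Fin.le_last q)))
        have := mul_nonneg (hβ (Fin.last r)) (dot_self_nonneg z)
        simpa using le_trans this h2
      rw [Fin.prod_univ_castSucc, hβlast, mul_zero]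
      exact psd_det_re_nonneg hCps
    · haveI : Invertible C' := C'.invertibleOfIsUnitDet (isUnit_iff_ne_zero.mpr hdet)
      set bv : Fin r → ℂ := fun q => C (Fin.castSucc q) (Fin.last r) with hbv
      set g : Fin r → ℂ := C'⁻¹ *ᵥ bv with hg
      have hC'g : C' *ᵥ g = bv := by
        rw [hg, Matrix.mulVec_mulVec, Matrix.mul_nonsing_inv _ (isUnit_iff_ne_zero.mpr hdet),
          Matrix.one_mulVec]
      set s : ℂ := C (Fin.last r) (Fin.last r)
          - (fun q => C (Fin.last r) (Fin.castSucc q)) ⬝ᵥ g with hs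
      set zv : Fin (r+1) → ℂ := Fin.snoc (-g) 1 with hzv
      have hzq : star zv ⬝ᵥ (C *ᵥ zv) = s := by
        rw [hzv, quad_snoc]
        have e1 : C.submatrix Fin.castSucc Fin.castSucc *ᵥ (-g) = -bv := by
          rw [← hC'def, Matrix.mulVec_neg, hC'g]
        rw [e1]
        simp only [star_neg, neg_dotProduct, dotProduct_neg, neg_neg, star_one,
          one_mul, mul_one]
        rw [hs]
        ring
      have hsim : s.im = 0 := by rw [← hzq]; exact quad_real hC zv
      have hsre : β (Fin.last r) ≤ s.re := by
        have h := hq (Fin.last r) zv (fun q hlt => absurd hlt (not_lt.mpr (Fin.le_last q)))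
        rw [hzq] at h
        have hz1 : (star zv ⬝ᵥ zv).re = (star (-g) ⬝ᵥ (-g)).re + 1 := by
          rw [hzv, star_snoc, dot_snoc]
          simp
        rw [hz1] at h
        nlinarith [dot_self_nonneg (-g), hβ (Fin.last r)]
      -- determinant identity
      set Bm : Matrix (Fin r) (Fin 1) ℂ := Matrix.of fun p _ => C (Fin.castSucc p) (Fin.last r)
        with hBm
      set Cm : Matrix (Fin 1) (Fin r) ℂ := Matrix.of fun _ q => C (Fin.last r) (Fin.castSucc q)
        with hCm
      set Dm : Matrix (Fin 1) (Fin 1) ℂ := Matrix.of fun _ _ => C (Fin.last r) (Fin.last r)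
        with hDm
      have hcast : ∀ j : Fin r, (finSumFinEquiv (Sum.inl j) : Fin (r+1)) = Fin.castSucc j := by
        intro j
        ext
        simp [finSumFinEquiv]
      have hlast : ∀ k : Fin 1, (finSumFinEquiv (Sum.inr k) : Fin (r+1)) = Fin.last r := by
        intro k
        ext
        simp [finSumFinEquiv, Fin.fin_one_eq_zero k]
      have hblock : Matrix.fromBlocks C' Bm Cm Dm
          = C.submatrix (finSumFinEquiv : Fin r ⊕ Fin 1 ≃ Fin (r+1))
              (finSumFinEquiv : Fin r ⊕ Fin 1 ≃ Fin (r+1)) := by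
        ext j k
        rcases j with j | j <;> rcases k with k | k <;>
          simp [Matrix.fromBlocks, hcast, hlast, hC'def, hBm, hCm, hDm]
      have h3 : ∀ k, (C'⁻¹ * Bm) k 0 = g k := by
        intro k
        rw [hg]
        simp [Matrix.mul_apply, Matrix.mulVec, dotProduct, hBm, hbv]
      have h2 : (Cm * (C'⁻¹ * Bm)) 0 0 = (fun q => C (Fin.last r) (Fin.castSucc q)) ⬝ᵥ g := by
        simp only [Matrix.mul_apply, h3, hCm, Matrix.of_apply, dotProduct]
      have hdetC : C.det = C'.det * s := by
        have h1 := Matrix.det_submatrix_equiv_self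
          (finSumFinEquiv : Fin r ⊕ Fin 1 ≃ Fin (r+1)) C
        rw [← hblock] at h1
        rw [← h1, Matrix.det_fromBlocks₁₁]
        congr 1
        rw [Matrix.det_fin_one, Matrix.invOf_eq_nonsing_inv, Matrix.sub_apply, Matrix.mul_assoc,
          h2, hs]
        simp [hDm]
      have hdet'im : C'.det.im = 0 := by
        have hst : star C'.det = C'.det := by
          rw [← Matrix.det_conjTranspose, hC'.eq]
        have := congrArg Complex.im hst
        simp at this
        linarith
      have hre : C.det.re = C'.det.re * s.re := by
        rw [hdetC, Complex.mul_re, hdet'im, hsim]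
        ring
      rw [Fin.prod_univ_castSucc, hre]
      have h0 : (0:ℝ) ≤ ∏ p : Fin r, β (Fin.castSucc p) :=
        Finset.prod_nonneg fun p _ => hβ _
      exact mul_le_mul ihr hsre (hβ _) (le_trans h0 ihr)

end DCB

namespace DCB2

lemma dot_conj {n : ℕ} (x y : Fin n → ℂ) : star x ⬝ᵥ y = star (star y ⬝ᵥ x) := by
  simp [dotProduct, map_sum, mul_comm]

lemma dot_self_re {n : ℕ} (x : Fin n → ℂ) :
    star x ⬝ᵥ x = ((∑ j, Complex.normSq (x j) : ℝ) : ℂ) := by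
  push_cast
  simp [dotProduct, mul_comm, Complex.mul_conj]

lemma dot_self_pos {n : ℕ} {x : Fin n → ℂ} (hx : x ≠ 0) :
    0 < (star x ⬝ᵥ x).re := by
  rw [dot_self_re, Complex.ofReal_re]
  have : ∃ j, x j ≠ 0 := by
    by_contra h
    push_neg at h
    exact hx (funext h)
  obtain ⟨j, hj⟩ := this
  refine Finset.sum_pos' (fun k _ => Complex.normSq_nonneg _) ⟨j, Finset.mem_univ j, ?_⟩
  simpa [Complex.normSq_pos] using hj

lemma exists_adapted {n : ℕ} : ∀ {r : ℕ} (K : Fin r → Submodule ℂ (Fin n → ℂ)),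
    (∀ p : Fin r, p.val + 1 ≤ Module.finrank ℂ (K p)) →
    ∃ w : Fin r → (Fin n → ℂ),
      (∀ p q, star (w p) ⬝ᵥ w q = if p = q then 1 else 0) ∧ ∀ p, w p ∈ K p := by
  intro r
  induction r with
  | zero => exact fun K _ => ⟨fun p => p.elim0, fun p => p.elim0, fun p => p.elim0⟩
  | succ r ih =>
    intro K hdim
    obtain ⟨w, hw, hwK⟩ := ih (fun p => K p.castSucc) (fun p => by
      simpa using hdim p.castSucc)
    let φ : (K (Fin.last r)) →ₗ[ℂ] (Fin r → ℂ) :=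
      { toFun := fun x => fun p => star (w p) ⬝ᵥ (x : Fin n → ℂ)
        map_add' := by intro a b; funext p; simp [dotProduct_add]
        map_smul' := by intro c a; funext p; simp [dotProduct_smul] }
    have hker : LinearMap.ker φ ≠ ⊥ := by
      intro hk
      have h1 := LinearMap.finrank_range_add_finrank_ker φ
      rw [hk, finrank_bot] at h1
      have h2 : Module.finrank ℂ (LinearMap.range φ) ≤ r := by
        have h4 := Submodule.finrank_le (LinearMap.range φ)
        rw [Module.finrank_fintype_fun_eq_card] at h4
        simpa using h4
      have h3 := hdim (Fin.last r)
      rw [Fin.val_last] at h3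
      omega
    obtain ⟨x, hxker, hx0⟩ := Submodule.exists_mem_ne_zero_of_ne_bot hker
    have hx00 : (x : Fin n → ℂ) ≠ 0 := by
      simpa [ZeroMemClass.coe_eq_zero] using hx0
    have hpos : 0 < (star (x : Fin n → ℂ) ⬝ᵥ (x : Fin n → ℂ)).re := dot_self_pos hx00
    set S : ℝ := (star (x : Fin n → ℂ) ⬝ᵥ (x : Fin n → ℂ)).re with hS
    set c : ℂ := (((Real.sqrt S)⁻¹ : ℝ) : ℂ) with hc
    set y : Fin n → ℂ := c • (x : Fin n → ℂ) with hy
    have hSx : star (x : Fin n → ℂ) ⬝ᵥ (x : Fin n → ℂ) = (S : ℂ) := by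
      rw [hS, dot_self_re, Complex.ofReal_re, ← dot_self_re]
    have hyy : star y ⬝ᵥ y = 1 := by
      rw [hy, star_smul, smul_dotProduct, dotProduct_smul, hSx]
      rw [hc]
      rw [show (star ((((Real.sqrt S)⁻¹ : ℝ) : ℂ)) : ℂ) = (((Real.sqrt S)⁻¹ : ℝ) : ℂ) by
        simp [Complex.star_def, Complex.conj_ofReal]]
      rw [smul_eq_mul, smul_eq_mul, ← Complex.ofReal_mul, ← Complex.ofReal_mul]
      norm_cast
      rw [← mul_assoc, ← Real.sqrt_inv, Real.mul_self_sqrt (by positivity),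
        inv_mul_cancel₀ hpos.ne']
    have hyw : ∀ p, star (w p) ⬝ᵥ y = 0 := by
      intro p
      have : φ x = 0 := hxker
      have hp := congrFun this p
      rw [hy, dotProduct_smul]
      simp only [φ, LinearMap.coe_mk, AddHom.coe_mk] at hp
      rw [hp]
      simp
    have hwy : ∀ p, star y ⬝ᵥ w p = 0 := by
      intro p
      rw [dot_conj, hyw p]
      simp
    refine ⟨Fin.snoc w y, ?_, ?_⟩
    · intro p q
      refine Fin.lastCases ?_ (fun p' => ?_) p
      · refine Fin.lastCases ?_ (fun q' => ?_) q
        · simp [Fin.snoc_last, hyy]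
        · simp only [Fin.snoc_last, Fin.snoc_castSucc]
          rw [hwy q', if_neg (Fin.castSucc_lt_last q').ne']
      · refine Fin.lastCases ?_ (fun q' => ?_) q
        · simp only [Fin.snoc_last, Fin.snoc_castSucc]
          rw [hyw p', if_neg (Fin.castSucc_lt_last p').ne]
        · simp only [Fin.snoc_castSucc]
          rw [hw p' q']
          by_cases h : p' = q'
          · simp [h]
          · rw [if_neg h, if_neg (fun hc => h (Fin.castSucc_injective _ hc))]
    · intro p
      refine Fin.lastCases ?_ (fun p' => ?_) p
      · rw [Fin.snoc_last]
        exact Submodule.smul_mem _ _ x.2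
      · rw [Fin.snoc_castSucc]
        exact hwK p'

end DCB2

namespace DCBaux

/-- columns matrix of a family of vectors -/
def col {n m : ℕ} (x : Fin m → Fin n → ℂ) : Matrix (Fin n) (Fin m) ℂ :=
  Matrix.of fun j p => x p j

lemma col_gram {n m : ℕ} (x y : Fin m → Fin n → ℂ) :
    (col x)ᴴ * (col y) = Matrix.of fun p q => star (x p) ⬝ᵥ y q := by
  ext p q
  simp [col, Matrix.mul_apply, Matrix.conjTranspose_apply, dotProduct]

lemma col_gramA {n m : ℕ} (A : Matrix (Fin n) (Fin n) ℂ) (x y : Fin m → Fin n → ℂ) :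
    (col x)ᴴ * A * (col y) = Matrix.of fun p q => star (x p) ⬝ᵥ (A *ᵥ y q) := by
  ext p q
  simp only [col, Matrix.mul_apply, Matrix.conjTranspose_apply, Matrix.of_apply,
    dotProduct, Matrix.mulVec, Pi.star_apply, Finset.sum_mul, Finset.mul_sum]
  rw [Finset.sum_comm]
  refine Finset.sum_congr rfl fun j _ => Finset.sum_congr rfl fun k _ => ?_
  ring

lemma gram_one {n m : ℕ} {x : Fin m → Fin n → ℂ}
    (hx : ∀ p q, star (x p) ⬝ᵥ x q = if p = q then 1 else 0) :
    (col x)ᴴ * (col x) = 1 := by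
  rw [col_gram]
  ext p q
  rw [Matrix.of_apply, hx p q, Matrix.one_apply]

lemma col_mulVec {n m : ℕ} (x : Fin m → Fin n → ℂ) (z : Fin m → ℂ) :
    (col x) *ᵥ z = ∑ q, z q • x q := by
  funext j
  simp [col, Matrix.mulVec, dotProduct, Finset.sum_apply, mul_comm]

end DCBaux


/-- Multiplicative determinant bound: for a positive semidefinite Hermitian
`A` with eigenvalues `α₁ ≥ … ≥ αₙ ≥ 0`, orthonormal eigenbasis `v`, flag
`F_k = span(v₁,…,v_k)`, and an `r`-dimensional subspace `L` with
`dim (L ⊓ F_{i_p}) ≥ p` for all `p`, one has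
`det(⟨A u_i, u_j⟩) ≥ ∏_p α_{i_p}` for any orthonormal basis `u` of `L`, with
equality for `L = span(v_{i₁},…,v_{i_r})`. -/
theorem determinant_compression_bound {n r : ℕ}
    (A : Matrix (Fin n) (Fin n) ℂ) (hA : A.IsHermitian) (hPSD : A.PosSemidef)
    (α : Fin n → ℝ) (hαmono : Antitone α) (hα0 : ∀ k, 0 ≤ α k)
    (v : Fin n → (Fin n → ℂ))
    (hv : ∀ p q, star (v p) ⬝ᵥ v q = if p = q then 1 else 0)
    (heig : ∀ k, A.mulVec (v k) = (α k : ℂ) • v k)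
    (i : Fin r → Fin n) (hi : StrictMono i)
    (L : Submodule ℂ (Fin n → ℂ)) (hL : Module.finrank ℂ L = r)
    (hSch : ∀ p : Fin r, p.val + 1 ≤
      Module.finrank ℂ ↥(L ⊓ Submodule.span ℂ {x | ∃ j, j ≤ i p ∧ x = v j}))
    (u : Fin r → (Fin n → ℂ))
    (hu : ∀ p q, star (u p) ⬝ᵥ u q = if p = q then 1 else 0)
    (huL : ∀ p, u p ∈ L)
    (hspan : Submodule.span ℂ (Set.range u) = L) :
    ∏ p, α (i p) ≤
      (Matrix.det (Matrix.of fun p q : Fin r => star (u p) ⬝ᵥ A.mulVec (u q))).re ∧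
    (Matrix.det (Matrix.of fun p q : Fin r =>
        star (v (i p)) ⬝ᵥ A.mulVec (v (i q)))).re = ∏ p, α (i p) := by
  
  classical
  have heq : (Matrix.det (Matrix.of fun p q : Fin r =>
      star (v (i p)) ⬝ᵥ A.mulVec (v (i q)))).re = ∏ p, α (i p) := by
    have hdiag : (Matrix.of fun p q : Fin r => star (v (i p)) ⬝ᵥ A.mulVec (v (i q)))
        = Matrix.diagonal (fun p => (α (i p) : ℂ)) := by
      ext p q
      rw [Matrix.of_apply, heig (i q), dotProduct_smul, hv (i p) (i q)]
      by_cases h : p = q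
      · subst h
        simp
      · have hne : i p ≠ i q := fun hc => h (hi.injective hc)
        simp [Matrix.diagonal_apply_ne _ h, hne]
    rw [hdiag, Matrix.det_diagonal, ← Complex.ofReal_prod, Complex.ofReal_re]
  refine ⟨?_, heq⟩
  set F : Fin r → Submodule ℂ (Fin n → ℂ) :=
    fun p => Submodule.span ℂ {x | ∃ j, j ≤ i p ∧ x = v j} with hF
  obtain ⟨w, hw, hwK⟩ := DCB2.exists_adapted (fun p => L ⊓ F p) (fun p => hSch p)
  have hwL : ∀ p, w p ∈ L := fun p => (Submodule.mem_inf.mp (hwK p)).1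
  have hwF : ∀ p, w p ∈ F p := fun p => (Submodule.mem_inf.mp (hwK p)).2
  set Uc : Matrix (Fin n) (Fin n) ℂ := DCBaux.col v with hUc
  set D : Matrix (Fin n) (Fin n) ℂ := Matrix.diagonal (fun k => (α k : ℂ)) with hD
  have hUcU : Ucᴴ * Uc = 1 := DCBaux.gram_one hv
  have hUUc : Uc * Ucᴴ = 1 := mul_eq_one_comm.mp hUcU
  have hAU : A * Uc = Uc * D := by
    ext j k
    have h1 := congrFun (heig k) j
    simp only [Matrix.mulVec, dotProduct, Pi.smul_apply, smul_eq_mul] at h1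
    rw [hUc, hD, Matrix.mul_diagonal]
    simp only [DCBaux.col, Matrix.mul_apply, Matrix.of_apply]
    rw [h1]
    ring
  have hAdec : A = Uc * D * Ucᴴ := by
    calc A = A * (Uc * Ucᴴ) := by rw [hUUc, Matrix.mul_one]
    _ = A * Uc * Ucᴴ := by rw [Matrix.mul_assoc]
    _ = Uc * D * Ucᴴ := by rw [hAU]
  have hquad : ∀ (p : Fin r) (y : Fin n → ℂ), y ∈ F p →
      α (i p) * (star y ⬝ᵥ y).re ≤ (star y ⬝ᵥ (A *ᵥ y)).re := by
    intro p y hy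
    have hvy : ∀ j, i p < j → star (v j) ⬝ᵥ y = 0 := by
      intro j hj
      induction hy using Submodule.span_induction with
      | mem x hx =>
        obtain ⟨m, hm, rfl⟩ := hx
        rw [hv j m, if_neg (fun h => absurd hj (by rw [h]; exact not_lt.mpr hm))]
      | zero => simp
      | add a b ha hb iha ihb => rw [dotProduct_add, iha, ihb, add_zero]
      | smul c a ha ihc => rw [dotProduct_smul, ihc, smul_zero]
    set cv : Fin n → ℂ := Ucᴴ *ᵥ y with hcv
    have hstar : star y ᵥ* Uc = star cv := by
      rw [hcv, Matrix.star_mulVec, Matrix.conjTranspose_conjTranspose]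
    have hcoef : ∀ j, cv j = star (v j) ⬝ᵥ y := by
      intro j
      simp [hcv, hUc, DCBaux.col, Matrix.mulVec, Matrix.conjTranspose_apply, dotProduct]
    have hczero : ∀ j, i p < j → cv j = 0 := by
      intro j hj
      rw [hcoef]
      exact hvy j hj
    have h1 : star y ⬝ᵥ (A *ᵥ y) = star cv ⬝ᵥ (D *ᵥ cv) := by
      conv_lhs => rw [hAdec]
      rw [← Matrix.mulVec_mulVec, ← Matrix.mulVec_mulVec, Matrix.dotProduct_mulVec, hstar, ← hcv]
    have h2 : star y ⬝ᵥ y = star cv ⬝ᵥ cv := by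
      nth_rewrite 2 [show y = Uc *ᵥ cv from by
        rw [hcv, Matrix.mulVec_mulVec, hUUc, Matrix.one_mulVec]]
      rw [Matrix.dotProduct_mulVec, hstar]
    have h3 : (star cv ⬝ᵥ (D *ᵥ cv)).re = ∑ j, α j * Complex.normSq (cv j) := by
      have h3' : star cv ⬝ᵥ (D *ᵥ cv) = ((∑ j, α j * Complex.normSq (cv j) : ℝ) : ℂ) := by
        rw [Complex.ofReal_sum, dotProduct]
        refine Finset.sum_congr rfl fun j _ => ?_
        rw [hD, Matrix.mulVec_diagonal, Pi.star_apply,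
          show (star (cv j) : ℂ) * ((α j : ℂ) * cv j) = (α j : ℂ) * (cv j * star (cv j)) from by
            ring,
          Complex.star_def, Complex.mul_conj]
        push_cast
        ring
      rw [h3', Complex.ofReal_re]
    have h4 : (star cv ⬝ᵥ cv).re = ∑ j, Complex.normSq (cv j) := by
      rw [DCB2.dot_self_re, Complex.ofReal_re]
    rw [h1, h2, h3, h4, Finset.mul_sum]
    refine Finset.sum_le_sum fun j _ => ?_
    by_cases hj : j ≤ i p
    · exact mul_le_mul_of_nonneg_right (hαmono hj) (Complex.normSq_nonneg _)
    · rw [hczero j (lt_of_not_ge hj)]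
      simp
  have hexp : ∀ x, x ∈ L → x = ∑ p, (star (u p) ⬝ᵥ x) • u p := by
    intro x hx
    rw [← hspan] at hx
    induction hx using Submodule.span_induction with
    | mem a ha =>
      obtain ⟨q, rfl⟩ := ha
      calc u q = ∑ p, (if p = q then (1:ℂ) else 0) • u p := by
            simp [ite_smul, Finset.sum_ite_eq']
        _ = ∑ p, (star (u p) ⬝ᵥ u q) • u p :=
            (Finset.sum_congr rfl fun p _ => by rw [hu p q]).symm
    | zero => simp
    | add a b ha hb iha ihb =>
      rw [show (∑ p, (star (u p) ⬝ᵥ (a + b)) • u p)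
          = (∑ p, (star (u p) ⬝ᵥ a) • u p) + (∑ p, (star (u p) ⬝ᵥ b) • u p) from by
        rw [← Finset.sum_add_distrib]
        refine Finset.sum_congr rfl fun p _ => ?_
        rw [dotProduct_add, add_smul]]
      rw [← iha, ← ihb]
    | smul c a ha iha =>
      rw [show (∑ p, (star (u p) ⬝ᵥ (c • a)) • u p)
          = c • ∑ p, (star (u p) ⬝ᵥ a) • u p from by
        rw [Finset.smul_sum]
        refine Finset.sum_congr rfl fun p _ => ?_
        rw [dotProduct_smul, smul_assoc]]
      rw [← iha]
  set Wu := DCBaux.col u with hWu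
  set Ww := DCBaux.col w with hWwdef
  set T : Matrix (Fin r) (Fin r) ℂ := Matrix.of fun p q => star (u p) ⬝ᵥ w q with hT
  have hWw : Ww = Wu * T := by
    ext j a
    rw [Matrix.mul_apply]
    have h5 := congrFun (hexp (w a) (hwL a)) j
    rw [Finset.sum_apply] at h5
    simp only [Pi.smul_apply, smul_eq_mul] at h5
    rw [hWwdef, show (DCBaux.col w) j a = w a j from rfl, h5]
    refine Finset.sum_congr rfl fun p _ => ?_
    rw [hWu, hT]
    simp [DCBaux.col, mul_comm]
  have hWuW : Wuᴴ * Wu = 1 := DCBaux.gram_one hu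
  have hWwW : Wwᴴ * Ww = 1 := DCBaux.gram_one hw
  have hTT : Tᴴ * T = 1 := by
    have h6 := hWwW
    rw [hWw, Matrix.conjTranspose_mul] at h6
    calc Tᴴ * T = Tᴴ * 1 * T := by rw [Matrix.mul_one]
      _ = Tᴴ * (Wuᴴ * Wu) * T := by rw [hWuW]
      _ = Tᴴ * Wuᴴ * (Wu * T) := by
          simp only [Matrix.mul_assoc]
      _ = 1 := h6
  have hdetT : star T.det * T.det = 1 := by
    have h7 := congrArg Matrix.det hTT
    rwa [Matrix.det_mul, Matrix.det_conjTranspose, Matrix.det_one] at h7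
  set Bu : Matrix (Fin r) (Fin r) ℂ := Matrix.of fun p q => star (u p) ⬝ᵥ (A *ᵥ u q) with hBu
  set Bw : Matrix (Fin r) (Fin r) ℂ := Matrix.of fun p q => star (w p) ⬝ᵥ (A *ᵥ w q) with hBwdef
  have hBuE : Wuᴴ * A * Wu = Bu := DCBaux.col_gramA A u u
  have hBwE : Wwᴴ * A * Ww = Bw := DCBaux.col_gramA A w w
  have hBw : Bw = Tᴴ * Bu * T := by
    rw [← hBuE, ← hBwE, hWw, Matrix.conjTranspose_mul]
    simp only [Matrix.mul_assoc]
  have hdetB : Bw.det = Bu.det := by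
    rw [hBw, Matrix.det_mul, Matrix.det_mul, Matrix.det_conjTranspose]
    calc star T.det * Bu.det * T.det = (star T.det * T.det) * Bu.det := by ring
      _ = Bu.det := by rw [hdetT, one_mul]
  have hBwH : Bw.IsHermitian := by
    rw [← hBwE]
    exact Matrix.isHermitian_conjTranspose_mul_mul _ hA
  have hkey := DCB.key Bw hBwH (fun p => α (i p)) (fun p => hα0 _) ?hq
  case hq =>
    intro p z hz
    set y : Fin n → ℂ := Ww *ᵥ z with hy
    have hstarz : star z ᵥ* Wwᴴ = star y := by rw [hy, Matrix.star_mulVec]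
    have hyF : y ∈ F p := by
      rw [hy, hWwdef, DCBaux.col_mulVec]
      refine Submodule.sum_mem _ fun q _ => ?_
      by_cases hq : q ≤ p
      · refine Submodule.smul_mem _ _ ?_
        refine Submodule.span_mono ?_ (hwF q)
        rintro t ⟨j, hj, rfl⟩
        exact ⟨j, le_trans hj (hi.monotone hq), rfl⟩
      · rw [hz q (lt_of_not_ge hq), zero_smul]
        exact Submodule.zero_mem _
    have h8 : star z ⬝ᵥ (Bw *ᵥ z) = star y ⬝ᵥ (A *ᵥ y) := by
      rw [← hBwE, ← Matrix.mulVec_mulVec, ← Matrix.mulVec_mulVec, Matrix.dotProduct_mulVec,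
        hstarz, hy]
    have h9 : star z ⬝ᵥ z = star y ⬝ᵥ y := by
      have h10 : star y ⬝ᵥ y = star z ⬝ᵥ ((Wwᴴ * Ww) *ᵥ z) := by
        rw [hy, Matrix.star_mulVec, Matrix.dotProduct_mulVec, Matrix.vecMul_vecMul,
          ← Matrix.dotProduct_mulVec]
      rw [h10, hWwW, Matrix.one_mulVec]
    rw [h8, h9]
    exact hquad p y hyF
  rw [hdetB] at hkey
  exact hkey
end

section
/- (Multiplicativity of the determinant of compressions along a product) Let C = A·B be a product of n×n complex matrices, and let L, M be r-dimensional subspaces of ℂⁿ with B(M) ⊆ L. Then D_{C*C}(M) = D_{A*A}(L) · D_{B*B}(M), where D_{H}(V) denotes det(⟨H u_i, u_j⟩) for an orthonormal basis (u_i) of V. -/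
open Matrix BigOperators

/-- Multiplicativity of determinants of compressions along a product: if
`C = A * B` and `L`, `M` are `r`-dimensional subspaces (given by orthonormal
bases `u` and `w`) with `B(M) ⊆ L`, then
`D_{CᴴC}(M) = D_{AᴴA}(L) · D_{BᴴB}(M)`, where `D_H(V) = det(⟨H u_i, u_j⟩)`
for an orthonormal basis `(u_i)` of `V`. -/
theorem det_compression_mul {n r : ℕ}
    (A B : Matrix (Fin n) (Fin n) ℂ)
    (u w : Fin r → (Fin n → ℂ))
    (hu : ∀ p q, star (u p) ⬝ᵥ u q = if p = q then 1 else 0)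
    (hw : ∀ p q, star (w p) ⬝ᵥ w q = if p = q then 1 else 0)
    (hBM : ∀ p, B.mulVec (w p) ∈ Submodule.span ℂ (Set.range u)) :
    Matrix.det (Matrix.of fun p q : Fin r =>
        star (w p) ⬝ᵥ ((A * B)ᴴ * (A * B)).mulVec (w q)) =
      Matrix.det (Matrix.of fun p q : Fin r =>
        star (u p) ⬝ᵥ (Aᴴ * A).mulVec (u q)) *
      Matrix.det (Matrix.of fun p q : Fin r =>
        star (w p) ⬝ᵥ (Bᴴ * B).mulVec (w q)) := by
  classical
  set U : Matrix (Fin n) (Fin r) ℂ := Matrix.of fun i p => u p i with hUdef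
  set W : Matrix (Fin n) (Fin r) ℂ := Matrix.of fun i q => w q i with hWdef
  -- compression matrices are Vᴴ * H * V
  have key : ∀ (H : Matrix (Fin n) (Fin n) ℂ) (v : Fin r → Fin n → ℂ),
      (Matrix.of fun p q : Fin r => star (v p) ⬝ᵥ H.mulVec (v q)) =
        (Matrix.of fun i p => v p i)ᴴ * H * (Matrix.of fun i p => v p i) := by
    intro H v
    ext p q
    simp only [Matrix.of_apply, Matrix.mul_apply, Matrix.conjTranspose_apply,
      Matrix.mulVec, dotProduct, Matrix.of_apply, Pi.star_apply,
      Finset.sum_mul, Finset.mul_sum]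
    rw [Finset.sum_comm]
    apply Finset.sum_congr rfl; intro j _
    apply Finset.sum_congr rfl; intro i _
    ring
  have hUU : Uᴴ * U = (1 : Matrix (Fin r) (Fin r) ℂ) := by
    ext p q
    have := hu p q
    simpa [Matrix.mul_apply, Matrix.conjTranspose_apply, dotProduct,
      Matrix.one_apply, hUdef] using this
  set T : Matrix (Fin r) (Fin r) ℂ := Uᴴ * (B * W) with hTdef
  have hT : ∀ p q, T p q = star (u p) ⬝ᵥ B.mulVec (w q) := by
    intro p q
    simp only [hTdef, Matrix.mul_apply, Matrix.conjTranspose_apply, hUdef, hWdef,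
      Matrix.of_apply, dotProduct, Matrix.mulVec, Pi.star_apply]
  -- representation of elements of span of u
  have hrep : ∀ v ∈ Submodule.span ℂ (Set.range u),
      v = ∑ p, (star (u p) ⬝ᵥ v) • u p := by
    intro v hv
    induction hv using Submodule.span_induction with
    | mem x hx =>
        obtain ⟨q, rfl⟩ := hx
        simp only [hu]
        rw [Finset.sum_congr rfl (fun p _ => by rw [ite_smul, one_smul, zero_smul])]
        simp
    | zero => simp
    | add x y hx hy ihx ihy =>
        rw [Finset.sum_congr rfl (fun p _ => by rw [dotProduct_add, add_smul])]
        rw [Finset.sum_add_distrib, ← ihx, ← ihy]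
    | smul c x hx ih =>
        rw [Finset.sum_congr rfl (fun p _ => by
          rw [dotProduct_smul, smul_assoc])]
        rw [← Finset.smul_sum, ← ih]
  have hBW : B * W = U * T := by
    ext i q
    have h2 := congrFun (hrep _ (hBM q)) i
    simp only [Finset.sum_apply, Pi.smul_apply, smul_eq_mul] at h2
    show B.mulVec (w q) i = ∑ p, U i p * T p q
    rw [h2]
    exact Finset.sum_congr rfl fun p _ => by rw [hT]; exact mul_comm _ _
  rw [key ((A * B)ᴴ * (A * B)) w, key (Aᴴ * A) u, key (Bᴴ * B) w]
  have hL : (Matrix.of fun i p => w p i)ᴴ * ((A * B)ᴴ * (A * B)) *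
      (Matrix.of fun i p => w p i) = Tᴴ * (Uᴴ * (Aᴴ * A) * U) * T := by
    show Wᴴ * ((A * B)ᴴ * (A * B)) * W = _
    have hABW : (A * B) * W = A * U * T := by
      rw [Matrix.mul_assoc, hBW, ← Matrix.mul_assoc]
    calc Wᴴ * ((A * B)ᴴ * (A * B)) * W
        = ((A * B) * W)ᴴ * ((A * B) * W) := by
          simp only [Matrix.conjTranspose_mul, Matrix.mul_assoc]
      _ = (A * U * T)ᴴ * (A * U * T) := by rw [hABW]
      _ = Tᴴ * (Uᴴ * (Aᴴ * A) * U) * T := by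
          simp only [Matrix.conjTranspose_mul, Matrix.mul_assoc]
  have hR : (Matrix.of fun i p => w p i)ᴴ * (Bᴴ * B) *
      (Matrix.of fun i p => w p i) = Tᴴ * T := by
    show Wᴴ * (Bᴴ * B) * W = _
    calc Wᴴ * (Bᴴ * B) * W = (B * W)ᴴ * (B * W) := by
          simp only [Matrix.conjTranspose_mul, Matrix.mul_assoc]
      _ = (U * T)ᴴ * (U * T) := by rw [hBW]
      _ = Tᴴ * (Uᴴ * U) * T := by
          simp only [Matrix.conjTranspose_mul, Matrix.mul_assoc]
      _ = Tᴴ * T := by rw [hUU, Matrix.mul_one]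
  rw [hL, hR]
  simp only [Matrix.det_mul]
  ring
end
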